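/- arXiv:2004.03444 — 8 statements merged into one kernel-verified Lean document; each statement's English description precedes it below -/
import Mathlib

section
/- Let T be an n×n real matrix with nonnegative entries and let ρ be its spectral radius (the maximum of the moduli of the complex roots of its characteristic polynomial). Then for every real x with 0 ≤ x < 1/ρ, the series ∑_{k≥1} (tr(T^k)/k)·x^k is summable (each term being nonnegative, since tr(T^k) ≥ 0 for a matrix with nonnegative entries). -/
open Polynomial Filter Finset

attribute [local instance] Matrix.linftyOpNormedRing Matrix.linftyOpNormedAlgebra

private lemma my_charpoly_eval {n : ℕ} (A : Matrix (Fin n) (Fin n) ℂ) (z : ℂ) :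
    A.charpoly.eval z = (Matrix.diagonal (fun _ => z) - A).det := by
  rw [Matrix.charpoly, ← Polynomial.coe_evalRingHom, RingHom.map_det]
  congr 1
  ext i j
  by_cases h : i = j <;>
    simp [Matrix.charmatrix_apply, h, Matrix.diagonal_apply, Matrix.sub_apply]

private lemma my_mem_spectrum {n : ℕ} (A : Matrix (Fin n) (Fin n) ℂ) (z : ℂ)
    (hz : z ∈ spectrum ℂ A) : z ∈ A.charpoly.roots := by
  rw [Polynomial.mem_roots (Matrix.charpoly_monic A).ne_zero, IsRoot, my_charpoly_eval]
  rw [spectrum.mem_iff, Matrix.isUnit_iff_isUnit_det, isUnit_iff_ne_zero, not_not] at hz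
  have e : Matrix.diagonal (fun _ : Fin n => z) = algebraMap ℂ (Matrix (Fin n) (Fin n) ℂ) z := by
    ext i j
    by_cases h : i = j <;> simp [Matrix.algebraMap_matrix_apply, Matrix.diagonal_apply, h]
  rw [e]
  exact hz

private lemma entry_le_linfty {n : ℕ} (M : Matrix (Fin n) (Fin n) ℂ) (i j : Fin n) :
    ‖M i j‖ ≤ ‖M‖ := by
  have h1 : ‖M i j‖₊ ≤ ∑ j', ‖M i j'‖₊ :=
    Finset.single_le_sum (f := fun j' => ‖M i j'‖₊) (fun _ _ => zero_le) (Finset.mem_univ j)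
  have h2 : (∑ j', ‖M i j'‖₊) ≤ ‖M‖₊ := by
    rw [Matrix.linfty_opNNNorm_def]
    exact Finset.le_sup (f := fun i => ∑ j', ‖M i j'‖₊) (Finset.mem_univ i)
  exact_mod_cast h1.trans h2

/-- For an n×n real matrix `T` with nonnegative entries and spectral radius `ρ`
(the maximum of the moduli of the complex roots of its characteristic polynomial),
for every real `x` with `0 ≤ x < 1/ρ`, the series `∑_{k≥1} (tr(T^k)/k)·x^k` is summable,
each term being nonnegative since `tr(T^k) ≥ 0`. -/
theorem ihara_log_series_summable
    (n : ℕ) (hn : 0 < n) (T : Matrix (Fin n) (Fin n) ℝ)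
    (hT : ∀ i j, 0 ≤ T i j) (ρ : ℝ)
    (hρ_ub : ∀ z ∈ (Matrix.charpoly (T.map (fun r => (r : ℂ)))).roots, ‖z‖ ≤ ρ)
    (hρ_mem : ∃ z ∈ (Matrix.charpoly (T.map (fun r => (r : ℂ)))).roots, ‖z‖ = ρ) :
    (∀ k : ℕ, 0 ≤ (T ^ (k + 1)).trace) ∧
      ∀ x : ℝ, 0 ≤ x → x < 1 / ρ →
        Summable (fun k : ℕ => (T ^ (k + 1)).trace / (k + 1) * x ^ (k + 1)) := by
  -- entries of all powers are nonnegative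
  have hpow : ∀ m : ℕ, ∀ i j, 0 ≤ (T ^ (m + 1)) i j := by
    intro m
    induction m with
    | zero => simpa using hT
    | succ m ih =>
      intro i j
      rw [pow_succ, Matrix.mul_apply]
      exact Finset.sum_nonneg fun k _ => mul_nonneg (ih i k) (hT k j)
  have htr : ∀ k : ℕ, 0 ≤ (T ^ (k + 1)).trace := fun k =>
    Finset.sum_nonneg fun i _ => hpow k i i
  refine ⟨htr, fun x hx hxρ => ?_⟩
  -- ρ is nonnegative
  obtain ⟨z₀, _, hz₀⟩ := hρ_mem
  have hρ0 : 0 ≤ ρ := hz₀ ▸ norm_nonneg z₀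
  rcases eq_or_lt_of_le hx with hx0 | hx0
  · simpa [← hx0] using summable_zero
  -- ρ must be positive (else 1/ρ = 0 in Lean, contradicting 0 < x < 1/ρ)
  have hρpos : 0 < ρ := by
    rcases eq_or_lt_of_le hρ0 with h | h
    · rw [← h] at hxρ; simp at hxρ; linarith
    · exact h
  have hρx : ρ < 1 / x := by
    rw [lt_div_iff₀ hx0]
    have := (lt_div_iff₀ hρpos).mp hxρ
    nlinarith
  -- choose r strictly between ρ and 1/x
  obtain ⟨r, hρr, hrx⟩ : ∃ r : ℝ, ρ < r ∧ r < 1 / x :=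
    ⟨(ρ + 1 / x) / 2, by linarith, by linarith⟩
  have hrpos : 0 < r := lt_trans hρpos hρr
  have hxr : x * r < 1 := by
    have := (lt_div_iff₀ hx0).mp hrx
    linarith
  -- the complex matrix
  set A : Matrix (Fin n) (Fin n) ℂ := T.map (fun r => (r : ℂ)) with hA
  haveI : CompleteSpace (Matrix (Fin n) (Fin n) ℂ) := FiniteDimensional.complete ℂ _
  -- spectral radius bound
  have hsr : spectralRadius ℂ A ≤ ENNReal.ofReal ρ := by
    rw [spectralRadius]
    refine iSup₂_le fun z hz => ?_
    have hzr : ‖z‖ ≤ ρ := hρ_ub z (my_mem_spectrum A z hz)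
    rw [← enorm_eq_nnnorm, ← ofReal_norm]
    exact ENNReal.ofReal_le_ofReal hzr
  have hsr' : spectralRadius ℂ A < ENNReal.ofReal r :=
    lt_of_le_of_lt hsr (by rwa [ENNReal.ofReal_lt_ofReal_iff hrpos])
  -- Gelfand's formula gives an eventual bound on ‖A ^ k‖
  have hG := spectrum.pow_nnnorm_pow_one_div_tendsto_nhds_spectralRadius A
  have hev : ∀ᶠ k : ℕ in atTop, (‖A ^ k‖₊ : ENNReal) ^ (1 / (k : ℝ)) < ENNReal.ofReal r :=
    hG.eventually_lt_const hsr'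
  have hev2 : ∀ᶠ k : ℕ in atTop, ‖A ^ k‖ ≤ r ^ k := by
    filter_upwards [hev, eventually_ge_atTop 1] with k hk hk1
    have hk0 : (k : ℝ) ≠ 0 := by positivity
    have h1 : (‖A ^ k‖₊ : ENNReal) =
        ((‖A ^ k‖₊ : ENNReal) ^ (1 / (k : ℝ))) ^ (k : ℝ) := by
      rw [← ENNReal.rpow_mul, one_div, inv_mul_cancel₀ hk0, ENNReal.rpow_one]
    have h2 : (‖A ^ k‖₊ : ENNReal) < ENNReal.ofReal r ^ (k : ℝ) := by
      rw [h1]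
      exact ENNReal.rpow_lt_rpow hk (by positivity)
    rw [ENNReal.ofReal_rpow_of_pos hrpos, Real.rpow_natCast] at h2
    rw [← enorm_eq_nnnorm, ← ofReal_norm] at h2
    have := (ENNReal.ofReal_lt_ofReal_iff (by positivity)).mp h2
    linarith
  -- trace bound : trace (T ^ m) ≤ n * ‖A ^ m‖
  have htrb : ∀ m : ℕ, (T ^ m).trace ≤ (n : ℝ) * ‖A ^ m‖ := by
    intro m
    have hmap : A ^ m = (T ^ m).map (fun r => (r : ℂ)) := by
      rw [hA]
      have := map_pow (Complex.ofRealHom.mapMatrix) T m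
      simp only [RingHom.mapMatrix_apply] at this
      exact this.symm
    calc (T ^ m).trace = ∑ i, (T ^ m) i i := rfl
      _ ≤ ∑ i : Fin n, ‖A ^ m‖ := by
          refine Finset.sum_le_sum fun i _ => ?_
          calc (T ^ m) i i ≤ |(T ^ m) i i| := le_abs_self _
            _ = ‖(A ^ m) i i‖ := by rw [hmap]; simp [Matrix.map_apply]
            _ ≤ ‖A ^ m‖ := entry_le_linfty _ i i
      _ = (n : ℝ) * ‖A ^ m‖ := by simp [mul_comm]
  -- comparison with a geometric series
  have hg : Summable (fun k : ℕ => (n : ℝ) * r * x * (x * r) ^ k) :=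
    ((summable_geometric_of_lt_one (by positivity) hxr).mul_left _)
  refine summable_of_isBigO_nat hg ?_
  rw [Asymptotics.isBigO_iff]
  refine ⟨1, ?_⟩
  have hev3 : ∀ᶠ k : ℕ in atTop, ‖A ^ (k + 1)‖ ≤ r ^ (k + 1) :=
    (tendsto_add_atTop_nat 1).eventually hev2
  filter_upwards [hev3] with k hk
  have h1 : 0 ≤ (T ^ (k + 1)).trace / (k + 1) * x ^ (k + 1) := by
    have := htr k
    positivity
  have h2 : (T ^ (k + 1)).trace / ((k : ℝ) + 1) ≤ (T ^ (k + 1)).trace :=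
    div_le_self (htr k) (by push_cast; linarith)
  rw [Real.norm_of_nonneg h1, one_mul, Real.norm_of_nonneg (by positivity)]
  calc (T ^ (k + 1)).trace / ((k : ℝ) + 1) * x ^ (k + 1)
      ≤ (T ^ (k + 1)).trace * x ^ (k + 1) := by
        apply mul_le_mul_of_nonneg_right h2 (by positivity)
    _ ≤ ((n : ℝ) * ‖A ^ (k + 1)‖) * x ^ (k + 1) :=
        mul_le_mul_of_nonneg_right (htrb (k + 1)) (by positivity)
    _ ≤ ((n : ℝ) * r ^ (k + 1)) * x ^ (k + 1) := by
        apply mul_le_mul_of_nonneg_right _ (by positivity)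
        exact mul_le_mul_of_nonneg_left hk (by positivity)
    _ = (n : ℝ) * r * x * (x * r) ^ k := by ring
end

section
/- For every natural number m and every x ∈ [0, R), the m-th iterated derivative of the restricted Ihara zeta function is nonnegative: iteratedDeriv m ζ x ≥ 0. In particular ζ, ζ', ζ'', … are all monotone increasing on [0,R). -/
open Set Filter Finset

namespace IharaAux

/-- formal derivative of coefficient sequence -/
noncomputable def D (c : ℕ → ℝ) : ℕ → ℝ := fun k => ((k : ℝ) + 1) * c (k + 1)

/-- admissible coefficient sequences -/
def Coef (R : ℝ) (c : ℕ → ℝ) : Prop :=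
  (∀ k, 0 ≤ c k) ∧ ∀ x : ℝ, 0 ≤ x → x < R → Summable (fun k => c k * x ^ k)

/-- sum of the power series -/
noncomputable def S (c : ℕ → ℝ) : ℝ → ℝ := fun x => ∑' k, c k * x ^ k

theorem Coef.summable_abs {R : ℝ} {c : ℕ → ℝ} (hc : Coef R c) {x : ℝ} (hx : |x| < R) :
    Summable (fun k => c k * x ^ k) := by
  have h := hc.2 |x| (abs_nonneg x) hx
  refine Summable.of_abs (h.congr fun k => ?_)
  rw [abs_mul, abs_pow, abs_of_nonneg (hc.1 k)]

theorem Coef.derivCoef {R : ℝ} {c : ℕ → ℝ} (hc : Coef R c) : Coef R (D c) := by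
  constructor
  · intro k
    exact mul_nonneg (by positivity) (hc.1 (k + 1))
  · intro x hx0 hxR
    obtain ⟨s, hxs, hsR⟩ : ∃ s : ℝ, x < s ∧ s < R := ⟨(x + R) / 2, by constructor <;> linarith⟩
    have hs0 : 0 < s := lt_of_le_of_lt hx0 hxs
    have hsum_s : Summable (fun k => c k * s ^ k) := hc.2 s hs0.le hsR
    set B : ℝ := ∑' k, c k * s ^ k with hB
    have hterm : ∀ k, c k * s ^ k ≤ B := by
      intro k
      exact Summable.le_tsum hsum_s k fun j _ => mul_nonneg (hc.1 j) (pow_nonneg hs0.le j)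
    have hratio : ‖x / s‖ < 1 := by
      rw [Real.norm_eq_abs, abs_of_nonneg (div_nonneg hx0 hs0.le)]
      rw [div_lt_one hs0]; exact hxs
    have hgeom : Summable (fun k : ℕ => ((k : ℝ) + 1) * (x / s) ^ k) := by
      have h1 := summable_pow_mul_geometric_of_norm_lt_one (R := ℝ) 1 hratio
      have h2 : Summable (fun k : ℕ => (x / s) ^ k) :=
        summable_geometric_of_norm_lt_one hratio
      refine ((h1.add h2).congr fun k => ?_)
      push_cast; ring
    refine Summable.of_nonneg_of_le
      (fun k => mul_nonneg (mul_nonneg (by positivity) (hc.1 (k + 1))) (pow_nonneg hx0 k))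
      (fun k => ?_) (hgeom.mul_left (B / s))
    have hck : c (k + 1) ≤ B / s ^ (k + 1) :=
      (le_div_iff₀ (pow_pos hs0 (k + 1))).2 (hterm (k + 1))
    calc ((k : ℝ) + 1) * c (k + 1) * x ^ k
        ≤ ((k : ℝ) + 1) * (B / s ^ (k + 1)) * x ^ k := by
          apply mul_le_mul_of_nonneg_right _ (pow_nonneg hx0 k)
          exact mul_le_mul_of_nonneg_left hck (by positivity)
      _ = B / s * (((k : ℝ) + 1) * (x / s) ^ k) := by
          rw [div_pow]; field_simp; ring

theorem Coef.nonneg_S {R : ℝ} {c : ℕ → ℝ} (hc : Coef R c) {x : ℝ} (hx : 0 ≤ x) :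
    0 ≤ S c x :=
  tsum_nonneg fun k => mul_nonneg (hc.1 k) (pow_nonneg hx k)

theorem Coef.iterD {R : ℝ} {c : ℕ → ℝ} (hc : Coef R c) (m : ℕ) : Coef R (D^[m] c) := by
  induction m with
  | zero => exact hc
  | succ m ih => rw [Function.iterate_succ_apply']; exact ih.derivCoef

theorem hasDerivAt_S {R : ℝ} {c : ℕ → ℝ} (hc : Coef R c) {x : ℝ} (hx : |x| < R) :
    HasDerivAt (S c) (S (D c) x) x := by
  obtain ⟨r, hxr, hrR⟩ : ∃ r : ℝ, |x| < r ∧ r < R := ⟨(|x| + R) / 2, by constructor <;> linarith⟩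
  have hr0 : 0 < r := lt_of_le_of_lt (abs_nonneg x) hxr
  set u : ℕ → ℝ := fun k => c k * (k : ℝ) * r ^ (k - 1) with hu_def
  have hu : Summable u := by
    rw [← summable_nat_add_iff 1]
    refine (((hc.derivCoef).2 r hr0.le hrR).congr fun k => ?_)
    show D c k * r ^ k = c (k + 1) * ((k + 1 : ℕ) : ℝ) * r ^ (k + 1 - 1)
    rw [Nat.add_sub_cancel, D]; push_cast; ring
  have hbound : ∀ (k : ℕ) (y : ℝ), |y| ≤ r → ‖c k * ((k : ℝ) * y ^ (k - 1))‖ ≤ u k := by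
    intro k y hy
    rw [Real.norm_eq_abs, abs_mul, abs_mul, abs_of_nonneg (hc.1 k), Nat.abs_cast, abs_pow]
    rw [hu_def]
    have : |y| ^ (k - 1) ≤ r ^ (k - 1) := pow_le_pow_left₀ (abs_nonneg y) hy _
    calc c k * ((k : ℝ) * |y| ^ (k - 1)) ≤ c k * ((k : ℝ) * r ^ (k - 1)) := by
          apply mul_le_mul_of_nonneg_left _ (hc.1 k)
          exact mul_le_mul_of_nonneg_left this (Nat.cast_nonneg k)
      _ = c k * (k : ℝ) * r ^ (k - 1) := by ring
  have h0mem : (0 : ℝ) ∈ Ioo (-r) r := by constructor <;> simp [hr0] <;> linarith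
  have hxmem : x ∈ Ioo (-r) r := abs_lt.1 hxr
  have key : HasDerivAt (fun z => ∑' k, c k * z ^ k)
      (∑' k, c k * ((k : ℝ) * x ^ (k - 1))) x := by
    refine hasDerivAt_tsum_of_isPreconnected hu isOpen_Ioo
      (convex_Ioo _ _).isPreconnected
      (fun k y _ => (hasDerivAt_pow k y).const_mul (c k))
      (fun k y hy => hbound k y (le_of_lt (abs_lt.2 ⟨hy.1, hy.2⟩))) h0mem ?_ hxmem
    refine summable_of_ne_finset_zero (s := {0}) fun k hk => ?_
    have : k ≠ 0 := by simpa using hk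
    simp [zero_pow this]
  have hsum2 : Summable (fun k => c k * ((k : ℝ) * x ^ (k - 1))) :=
    Summable.of_norm_bounded hu fun k => hbound k x hxr.le
  have heq : (∑' k, c k * ((k : ℝ) * x ^ (k - 1))) = S (D c) x := by
    rw [Summable.tsum_eq_zero_add hsum2]
    simp only [Nat.cast_zero, zero_mul, mul_zero, zero_add]
    refine tsum_congr fun k => ?_
    show c (k + 1) * (((k : ℕ) + 1 : ℕ) * x ^ (k + 1 - 1)) = D c k * x ^ k
    rw [Nat.add_sub_cancel, D]; push_cast; ring
  rw [← heq]
  exact key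

theorem mem_U_abs {R x : ℝ} (hx : x ∈ Ioo (-R) R) : |x| < R := abs_lt.2 ⟨hx.1, hx.2⟩

theorem iteratedDeriv_S {R : ℝ} {c : ℕ → ℝ} (hc : Coef R c) :
    ∀ m : ℕ, ∀ x ∈ Ioo (-R) R, iteratedDeriv m (S c) x = S (D^[m] c) x := by
  intro m
  induction m with
  | zero => intro x _; simp [iteratedDeriv_zero]
  | succ m ih =>
    intro x hx
    rw [iteratedDeriv_succ]
    have hev : iteratedDeriv m (S c) =ᶠ[nhds x] S (D^[m] c) :=
      eventuallyEq_of_mem (isOpen_Ioo.mem_nhds hx) fun y hy => ih y hy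
    rw [hev.deriv_eq, (hasDerivAt_S (hc.iterD m) (mem_U_abs hx)).deriv,
      Function.iterate_succ_apply']

theorem hasDerivAt_iteratedDeriv_S {R : ℝ} {c : ℕ → ℝ} (hc : Coef R c) (m : ℕ)
    {x : ℝ} (hx : x ∈ Ioo (-R) R) :
    HasDerivAt (iteratedDeriv m (S c)) (iteratedDeriv (m + 1) (S c) x) x := by
  have hev : iteratedDeriv m (S c) =ᶠ[nhds x] S (D^[m] c) :=
    eventuallyEq_of_mem (isOpen_Ioo.mem_nhds hx) fun y hy => iteratedDeriv_S hc m y hy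
  have h := (hasDerivAt_S (hc.iterD m) (mem_U_abs hx)).congr_of_eventuallyEq hev
  have hval : iteratedDeriv (m + 1) (S c) x = S (D (D^[m] c)) x := by
    rw [iteratedDeriv_S hc (m + 1) x hx, Function.iterate_succ_apply']
  rw [hval]
  exact h

theorem iteratedDeriv_congr_on {U : Set ℝ} (hU : IsOpen U) {f g : ℝ → ℝ}
    (h : ∀ y ∈ U, f y = g y) :
    ∀ m : ℕ, ∀ x ∈ U, iteratedDeriv m f x = iteratedDeriv m g x := by
  intro m
  induction m with
  | zero => simpa [iteratedDeriv_zero] using h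
  | succ m ih =>
    intro x hx
    rw [iteratedDeriv_succ, iteratedDeriv_succ]
    exact Filter.EventuallyEq.deriv_eq
      (eventuallyEq_of_mem (hU.mem_nhds hx) fun y hy => ih y hy)

theorem pascal_sum (a b : ℕ → ℝ) (m : ℕ) :
    ∑ k ∈ Finset.range (m + 1),
        (m.choose k : ℝ) * (a (k + 1) * b (m - k) + a k * b (m - k + 1)) =
      ∑ k ∈ Finset.range (m + 2), ((m + 1).choose k : ℝ) * (a k * b (m + 1 - k)) := by
  have hsplit : ∑ k ∈ Finset.range (m + 1),
      (m.choose k : ℝ) * (a (k + 1) * b (m - k) + a k * b (m - k + 1)) =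
      (∑ k ∈ Finset.range (m + 1), (m.choose k : ℝ) * (a (k + 1) * b (m - k))) +
      ∑ k ∈ Finset.range (m + 1), (m.choose k : ℝ) * (a k * b (m - k + 1)) := by
    rw [← Finset.sum_add_distrib]; apply Finset.sum_congr rfl; intros; ring
  rw [hsplit]
  -- expand RHS
  rw [Finset.sum_range_succ' (fun k => ((m + 1).choose k : ℝ) * (a k * b (m + 1 - k))) (m + 1)]
  have hrhs : ∑ i ∈ Finset.range (m + 1),
      ((m + 1).choose (i + 1) : ℝ) * (a (i + 1) * b (m + 1 - (i + 1))) =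
      (∑ i ∈ Finset.range (m + 1), (m.choose i : ℝ) * (a (i + 1) * b (m - i))) +
      ∑ i ∈ Finset.range (m + 1), (m.choose (i + 1) : ℝ) * (a (i + 1) * b (m - i)) := by
    rw [← Finset.sum_add_distrib]
    apply Finset.sum_congr rfl
    intro i _
    have h1 : (m + 1).choose (i + 1) = m.choose i + m.choose (i + 1) := Nat.choose_succ_succ' m i
    have h2 : m + 1 - (i + 1) = m - i := by omega
    rw [h1, h2]; push_cast; ring
  rw [hrhs]
  -- now handle the second LHS sum
  have hlhs2 : ∑ k ∈ Finset.range (m + 1), (m.choose k : ℝ) * (a k * b (m - k + 1)) =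
      (∑ i ∈ Finset.range (m + 1), (m.choose (i + 1) : ℝ) * (a (i + 1) * b (m - i))) +
      (a 0 * b (m + 1)) := by
    rw [Finset.sum_range_succ' (fun k => (m.choose k : ℝ) * (a k * b (m - k + 1))) m]
    congr 1
    · rw [Finset.sum_range_succ]
      have : (m.choose (m + 1) : ℝ) = 0 := by
        rw [Nat.choose_succ_self]; norm_num
      rw [this, zero_mul, add_zero]
      apply Finset.sum_congr rfl
      intro i hi
      have hi' : i < m := Finset.mem_range.1 hi
      have : m - (i + 1) + 1 = m - i := by omega
      rw [this]
    · simp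
  rw [hlhs2]
  have hcast : ((m + 1).choose 0 : ℝ) = 1 := by norm_num
  rw [hcast]
  have : m + 1 - 0 = m + 1 := rfl
  rw [this]
  ring

theorem leibniz_on {U : Set ℝ} (hU : IsOpen U) (u v : ℝ → ℝ) :
    ∀ m : ℕ,
      (∀ k < m, ∀ x ∈ U, HasDerivAt (iteratedDeriv k u) (iteratedDeriv (k + 1) u x) x) →
      (∀ k < m, ∀ x ∈ U, HasDerivAt (iteratedDeriv k v) (iteratedDeriv (k + 1) v x) x) →
      ∀ x ∈ U, iteratedDeriv m (fun y => u y * v y) x =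
        ∑ k ∈ Finset.range (m + 1),
          (m.choose k : ℝ) * (iteratedDeriv k u x * iteratedDeriv (m - k) v x) := by
  intro m
  induction m with
  | zero =>
    intro _ _ x _
    simp [iteratedDeriv_zero]
  | succ m ih =>
    intro hu hv x hx
    have hu' : ∀ k < m, ∀ x ∈ U, HasDerivAt (iteratedDeriv k u) (iteratedDeriv (k + 1) u x) x :=
      fun k hk => hu k (Nat.lt_succ_of_lt hk)
    have hv' : ∀ k < m, ∀ x ∈ U, HasDerivAt (iteratedDeriv k v) (iteratedDeriv (k + 1) v x) x :=
      fun k hk => hv k (Nat.lt_succ_of_lt hk)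
    have hev : iteratedDeriv m (fun y => u y * v y) =ᶠ[nhds x]
        fun y => ∑ k ∈ Finset.range (m + 1),
          (m.choose k : ℝ) * (iteratedDeriv k u y * iteratedDeriv (m - k) v y) :=
      eventuallyEq_of_mem (hU.mem_nhds hx) fun y hy => ih hu' hv' y hy
    rw [iteratedDeriv_succ, hev.deriv_eq]
    have hD : HasDerivAt
        (fun y => ∑ k ∈ Finset.range (m + 1),
          (m.choose k : ℝ) * (iteratedDeriv k u y * iteratedDeriv (m - k) v y))
        (∑ k ∈ Finset.range (m + 1),
          (m.choose k : ℝ) * (iteratedDeriv (k + 1) u x * iteratedDeriv (m - k) v x +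
            iteratedDeriv k u x * iteratedDeriv (m - k + 1) v x)) x := by
      refine HasDerivAt.fun_sum fun k hk => ?_
      have hk' : k < m + 1 := Finset.mem_range.1 hk
      have hk'' : m - k < m + 1 := by omega
      exact ((hu k hk' x hx).mul (hv (m - k) hk'' x hx)).const_mul _
    rw [hD.deriv]
    exact pascal_sum (fun k => iteratedDeriv k u x) (fun k => iteratedDeriv k v x) m

end IharaAux

open IharaAux Set

/-- For every natural number m and every x ∈ [0, R), the m-th iterated
derivative of the restricted Ihara zeta function is nonnegative; in particular
ζ, ζ', ζ'', … are all monotone increasing on [0,R). -/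
theorem ihara_zeta_iteratedDeriv_nonneg
    (n : ℕ) (hn : 0 < n) (T : Matrix (Fin n) (Fin n) ℝ)
    (hT : ∀ i j, 0 ≤ T i j) (htr : T.trace = 0)
    (R : ℝ) (hR : 0 < R)
    (hsum : ∀ x ∈ Set.Ico (0 : ℝ) R,
      Summable (fun k : ℕ => (T ^ (k + 1)).trace / (k + 1) * x ^ (k + 1)))
    (ζ : ℝ → ℝ)
    (hζ : ∀ x : ℝ, ζ x = Real.exp (∑' k : ℕ, (T ^ (k + 1)).trace / (k + 1) * x ^ (k + 1))) :
    (∀ (m : ℕ), ∀ x ∈ Set.Ico (0 : ℝ) R, 0 ≤ iteratedDeriv m ζ x) ∧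
      ∀ (m : ℕ), ∀ x ∈ Set.Ico (0 : ℝ) R, ∀ y ∈ Set.Ico (0 : ℝ) R, x ≤ y →
        iteratedDeriv m ζ x ≤ iteratedDeriv m ζ y := by
  classical
  -- entries and traces of powers are nonnegative
  have hTpow : ∀ k : ℕ, ∀ i j, 0 ≤ (T ^ k) i j := by
    intro k
    induction k with
    | zero => intro i j; simp [Matrix.one_apply]; split <;> norm_num
    | succ k ih =>
      intro i j
      rw [pow_succ, Matrix.mul_apply]
      exact Finset.sum_nonneg fun l _ => mul_nonneg (ih i l) (hT l j)
  have htrace : ∀ k : ℕ, 0 ≤ (T ^ k).trace := by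
    intro k
    rw [Matrix.trace]
    exact Finset.sum_nonneg fun i _ => hTpow k i i
  -- the coefficient sequence
  set c₀ : ℕ → ℝ := fun k => if k = 0 then 0 else (T ^ k).trace / k with hc₀def
  have hc₀succ : ∀ k : ℕ, c₀ (k + 1) = (T ^ (k + 1)).trace / ((k : ℝ) + 1) := by
    intro k
    rw [hc₀def]
    simp only [Nat.succ_ne_zero, if_false]
    push_cast
    ring
  have hc₀ : Coef R c₀ := by
    constructor
    · intro k
      rw [hc₀def]
      dsimp only
      split
      · exact le_refl 0
      · exact div_nonneg (htrace k) (Nat.cast_nonneg k)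
    · intro x hx0 hxR
      rw [← summable_nat_add_iff 1]
      refine (hsum x ⟨hx0, hxR⟩).congr fun k => ?_
      rw [hc₀succ k]
  -- domain of analyticity
  have hIco : Ico (0 : ℝ) R ⊆ Ioo (-R) R := fun z hz => ⟨lt_of_lt_of_le (by linarith) hz.1, hz.2⟩
  -- ζ agrees with exp ∘ (S c₀) on the ball
  have hζU : ∀ x ∈ Ioo (-R) R, ζ x = Real.exp (S c₀ x) := by
    intro x hx
    rw [hζ x]
    congr 1
    have hsx : Summable (fun k => c₀ k * x ^ k) := hc₀.summable_abs (mem_U_abs hx)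
    rw [S, Summable.tsum_eq_zero_add hsx]
    have h0 : c₀ 0 * x ^ 0 = 0 := by rw [hc₀def]; simp
    rw [h0, zero_add]
    exact (tsum_congr fun k => by rw [hc₀succ k]).symm
  -- basic derivative of ζ on the ball
  have hbase : ∀ x ∈ Ioo (-R) R, HasDerivAt ζ (S (D c₀) x * ζ x) x := by
    intro x hx
    have hZ : HasDerivAt (fun y => Real.exp (S c₀ y))
        (Real.exp (S c₀ x) * S (D c₀) x) x := (hasDerivAt_S hc₀ (mem_U_abs hx)).exp
    have hev : ζ =ᶠ[nhds x] fun y => Real.exp (S c₀ y) :=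
      Filter.eventuallyEq_of_mem (isOpen_Ioo.mem_nhds hx) fun y hy => hζU y hy
    have h2 : Real.exp (S c₀ x) * S (D c₀) x = S (D c₀) x * ζ x := by
      rw [hζU x hx]; ring
    exact h2 ▸ hZ.congr_of_eventuallyEq hev
  -- all iterated derivatives of ζ exist on the ball, with chain structure
  have key : ∀ m : ℕ, ∀ k ≤ m, ∀ x ∈ Ioo (-R) R,
      HasDerivAt (iteratedDeriv k ζ) (iteratedDeriv (k + 1) ζ x) x := by
    intro m
    induction m with
    | zero =>
      intro k hk x hx
      have hk0 : k = 0 := Nat.le_zero.1 hk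
      subst hk0
      rw [iteratedDeriv_zero, iteratedDeriv_one, (hbase x hx).deriv]
      exact hbase x hx
    | succ m ihm =>
      intro k hk x hx
      by_cases hkm : k ≤ m
      · exact ihm k hkm x hx
      have hk1 : k = m + 1 := by omega
      subst hk1
      have hEq : ∀ y ∈ Ioo (-R) R, iteratedDeriv (m + 1) ζ y =
          ∑ j ∈ Finset.range (m + 1), (m.choose j : ℝ) *
            (iteratedDeriv j (S (D c₀)) y * iteratedDeriv (m - j) ζ y) := by
        intro y hy
        rw [iteratedDeriv_succ',
          iteratedDeriv_congr_on isOpen_Ioo (fun z hz => (hbase z hz).deriv) m y hy]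
        exact leibniz_on isOpen_Ioo (S (D c₀)) ζ m
          (fun j _ z hz => hasDerivAt_iteratedDeriv_S hc₀.derivCoef j hz)
          (fun j hj z hz => ihm j (Nat.le_of_lt_succ (Nat.lt_succ_of_lt hj)) z hz) y hy
      have hG : HasDerivAt
          (fun y => ∑ j ∈ Finset.range (m + 1), (m.choose j : ℝ) *
            (iteratedDeriv j (S (D c₀)) y * iteratedDeriv (m - j) ζ y))
          (∑ j ∈ Finset.range (m + 1), (m.choose j : ℝ) *
            (iteratedDeriv (j + 1) (S (D c₀)) x * iteratedDeriv (m - j) ζ x +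
             iteratedDeriv j (S (D c₀)) x * iteratedDeriv (m - j + 1) ζ x)) x := by
        refine HasDerivAt.fun_sum fun j hj => ?_
        exact ((hasDerivAt_iteratedDeriv_S hc₀.derivCoef j hx).mul
          (ihm (m - j) (Nat.sub_le m j) x hx)).const_mul _
      have hfinal := hG.congr_of_eventuallyEq
          (Filter.eventuallyEq_of_mem (isOpen_Ioo.mem_nhds hx) fun y hy => hEq y hy)
      have hd : iteratedDeriv (m + 1 + 1) ζ x = deriv (iteratedDeriv (m + 1) ζ) x := by
        rw [iteratedDeriv_succ]
      rw [hd, hfinal.deriv]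
      exact hfinal
  -- the Leibniz formula for iterated derivatives of ζ
  have hFormula : ∀ m : ℕ, ∀ x ∈ Ioo (-R) R, iteratedDeriv (m + 1) ζ x =
      ∑ j ∈ Finset.range (m + 1), (m.choose j : ℝ) *
        (iteratedDeriv j (S (D c₀)) x * iteratedDeriv (m - j) ζ x) := by
    intro m x hx
    rw [iteratedDeriv_succ',
      iteratedDeriv_congr_on isOpen_Ioo (fun z hz => (hbase z hz).deriv) m x hx]
    exact leibniz_on isOpen_Ioo (S (D c₀)) ζ m
      (fun j _ z hz => hasDerivAt_iteratedDeriv_S hc₀.derivCoef j hz)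
      (fun j hj z hz => key m j (Nat.le_of_lt_succ (Nat.lt_succ_of_lt hj)) z hz) x hx
  -- nonnegativity of iterated derivatives of the series part
  have hf₁ : ∀ j : ℕ, ∀ x ∈ Ico (0 : ℝ) R, 0 ≤ iteratedDeriv j (S (D c₀)) x := by
    intro j x hx
    rw [iteratedDeriv_S hc₀.derivCoef j x (hIco hx)]
    exact ((hc₀.derivCoef).iterD j).nonneg_S hx.1
  -- nonnegativity
  have hNon : ∀ m : ℕ, ∀ k ≤ m, ∀ x ∈ Ico (0 : ℝ) R, 0 ≤ iteratedDeriv k ζ x := by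
    intro m
    induction m with
    | zero =>
      intro k hk x hx
      have hk0 : k = 0 := Nat.le_zero.1 hk
      subst hk0
      rw [iteratedDeriv_zero, hζ x]
      exact (Real.exp_pos _).le
    | succ m ihm =>
      intro k hk x hx
      by_cases hkm : k ≤ m
      · exact ihm k hkm x hx
      have hk1 : k = m + 1 := by omega
      subst hk1
      rw [hFormula m x (hIco hx)]
      refine Finset.sum_nonneg fun j _ => ?_
      exact mul_nonneg (Nat.cast_nonneg _)
        (mul_nonneg (hf₁ j x hx) (ihm (m - j) (Nat.sub_le m j) x hx))
  refine ⟨fun m x hx => hNon m m le_rfl x hx, fun m x hx y hy hxy => ?_⟩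
  have hmono : MonotoneOn (iteratedDeriv m ζ) (Ico (0 : ℝ) R) := by
    apply monotoneOn_of_deriv_nonneg (convex_Ico 0 R)
    · intro z hz
      exact (key m m le_rfl z (hIco hz)).continuousAt.continuousWithinAt
    · intro z hz
      rw [interior_Ico] at hz
      exact (key m m le_rfl z (hIco ⟨hz.1.le, hz.2⟩)).differentiableAt.differentiableWithinAt
    · intro z hz
      rw [interior_Ico] at hz
      have hzI : z ∈ Ico (0 : ℝ) R := ⟨hz.1.le, hz.2⟩
      rw [(key m m le_rfl z (hIco hzI)).deriv]
      exact hNon (m + 1) (m + 1) le_rfl z hzI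
  exact hmono hx hy hxy
end

section
/- For every p ∈ [0,1] one has s(p) ≥ 0, i.e. p·(ζ(a) + 1 − ζ(a·p) − p)/(1 + a·ζ'(a)) ≥ 0. Consequently, for any discrete probability distribution p₁,…,p_W (pᵢ ≥ 0, ∑ᵢ pᵢ = 1), the Ihara entropy S_G(P) = ∑ᵢ s(pᵢ) is nonnegative. -/
lemma deriv_nonneg_of_monotoneOn {f : ℝ → ℝ} {a lo hi : ℝ} (h1 : lo < a) (h2 : a < hi)
    (hm : MonotoneOn f (Set.Ioo lo hi)) : 0 ≤ deriv f a := by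
  by_cases hd : DifferentiableAt ℝ f a
  · have hT := hasDerivAt_iff_tendsto_slope.1 hd.hasDerivAt
    refine ge_of_tendsto hT ?_
    have hmem : Set.Ioo lo hi ∈ nhdsWithin a {a}ᶜ :=
      mem_nhdsWithin_of_mem_nhds (Ioo_mem_nhds h1 h2)
    filter_upwards [hmem, self_mem_nhdsWithin] with x hx hne
    have haI : a ∈ Set.Ioo lo hi := ⟨h1, h2⟩
    rcases lt_or_gt_of_ne (hne : x ≠ a) with h | h
    · have hfx : f x ≤ f a := hm hx haI h.le
      have heq : slope f a x = (f x - f a) / (x - a) := by simp [slope_def_field]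
      rw [heq]
      exact div_nonneg_iff.mpr (Or.inr ⟨by linarith, by linarith⟩)
    · have hfx : f a ≤ f x := hm haI hx h.le
      have heq : slope f a x = (f x - f a) / (x - a) := by simp [slope_def_field]
      rw [heq]
      exact div_nonneg (by linarith) (by linarith)
  · simp [deriv_zero_of_not_differentiableAt hd]

/-- For every p ∈ [0,1] one has s(p) ≥ 0; consequently the Ihara entropy
S_G(P) = ∑ᵢ s(pᵢ) of any discrete probability distribution is nonnegative. -/
theorem ihara_entropy_nonneg
    (n : ℕ) (hn : 0 < n) (T : Matrix (Fin n) (Fin n) ℝ)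
    (hT : ∀ i j, 0 ≤ T i j) (htr : T.trace = 0)
    (R : ℝ) (hR : 0 < R)
    (hsum : ∀ x ∈ Set.Ico (0 : ℝ) R,
      Summable (fun k : ℕ => (T ^ (k + 1)).trace / (k + 1) * x ^ (k + 1)))
    (ζ : ℝ → ℝ)
    (hζ : ∀ x : ℝ, ζ x = Real.exp (∑' k : ℕ, (T ^ (k + 1)).trace / (k + 1) * x ^ (k + 1)))
    (a : ℝ) (ha : a ∈ Set.Ioo (0 : ℝ) R)
    (s : ℝ → ℝ)
    (hs : ∀ p : ℝ, s p = p * (ζ a + 1 - ζ (a * p) - p) / (1 + a * deriv ζ a)) :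
    (∀ p ∈ Set.Icc (0 : ℝ) 1, 0 ≤ s p) ∧
      ∀ (W : ℕ) (p : Fin W → ℝ), (∀ i, 0 ≤ p i) → (∑ i, p i) = 1 →
        0 ≤ ∑ i, s (p i) := by
  obtain ⟨ha0, haR⟩ := ha
  -- entries of powers of T are nonneg
  have hpow : ∀ m : ℕ, ∀ i j, 0 ≤ (T ^ m) i j := by
    intro m
    induction m with
    | zero => intro i j; simp [Matrix.one_apply]; positivity
    | succ m ih =>
      intro i j
      rw [pow_succ, Matrix.mul_apply]
      exact Finset.sum_nonneg fun k _ => mul_nonneg (ih i k) (hT k j)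
  have htrace : ∀ m : ℕ, 0 ≤ (T ^ m).trace := fun m =>
    Finset.sum_nonneg fun i _ => hpow m i i
  have hc : ∀ k : ℕ, 0 ≤ (T ^ (k + 1)).trace / (k + 1 : ℝ) := fun k =>
    div_nonneg (htrace _) (by positivity)
  -- monotonicity of ζ on [0, R)
  have hmono : ∀ x ∈ Set.Ico (0 : ℝ) R, ∀ y ∈ Set.Ico (0 : ℝ) R, x ≤ y → ζ x ≤ ζ y := by
    intro x hx y hy hxy
    rw [hζ x, hζ y, Real.exp_le_exp]
    refine Summable.tsum_le_tsum (fun k => ?_) (hsum x hx) (hsum y hy)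
    exact mul_le_mul_of_nonneg_left (pow_le_pow_left₀ hx.1 hxy _) (hc k)
  -- derivative nonneg
  have hd : 0 ≤ deriv ζ a := by
    refine deriv_nonneg_of_monotoneOn ha0 haR ?_
    intro x hx y hy hxy
    exact hmono x ⟨hx.1.le, hx.2⟩ y ⟨hy.1.le, hy.2⟩ hxy
  have hden : (0:ℝ) < 1 + a * deriv ζ a := by nlinarith
  have key : ∀ p ∈ Set.Icc (0 : ℝ) 1, 0 ≤ s p := by
    intro p hp
    obtain ⟨hp0, hp1⟩ := hp
    rw [hs p]
    have hζle : ζ (a * p) ≤ ζ a := by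
      refine hmono (a * p) ⟨by positivity, ?_⟩ a ⟨ha0.le, haR⟩ ?_
      · have : a * p ≤ a := by nlinarith
        linarith
      · nlinarith
    exact div_nonneg (mul_nonneg hp0 (by linarith)) hden.le
  refine ⟨key, fun W p hp hsum1 => ?_⟩
  refine Finset.sum_nonneg fun i _ => key (p i) ⟨hp i, ?_⟩
  calc p i ≤ ∑ j, p j := Finset.single_le_sum (fun j _ => hp j) (Finset.mem_univ i)
    _ = 1 := hsum1
end

section
/- The function s is continuous on the interval [0,1]; consequently the Ihara entropy S_G(P) = ∑_{i=1}^W s(pᵢ) is a continuous function of its arguments (p₁,…,p_W) on the probability simplex (first Shannon–Khinchin axiom). -/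
/-- The function s is continuous on [0,1]; consequently the Ihara entropy
S_G(P) = ∑ᵢ s(pᵢ) is a continuous function of (p₁,…,p_W) on the probability simplex
(first Shannon–Khinchin axiom). -/
theorem ihara_entropy_continuous
    (n : ℕ) (hn : 0 < n) (T : Matrix (Fin n) (Fin n) ℝ)
    (hT : ∀ i j, 0 ≤ T i j) (htr : T.trace = 0)
    (R : ℝ) (hR : 0 < R)
    (hsum : ∀ x ∈ Set.Ico (0 : ℝ) R,
      Summable (fun k : ℕ => (T ^ (k + 1)).trace / (k + 1) * x ^ (k + 1)))
    (ζ : ℝ → ℝ)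
    (hζ : ∀ x : ℝ, ζ x = Real.exp (∑' k : ℕ, (T ^ (k + 1)).trace / (k + 1) * x ^ (k + 1)))
    (a : ℝ) (ha : a ∈ Set.Ioo (0 : ℝ) R)
    (s : ℝ → ℝ)
    (hs : ∀ p : ℝ, s p = p * (ζ a + 1 - ζ (a * p) - p) / (1 + a * deriv ζ a)) :
    ContinuousOn s (Set.Icc (0 : ℝ) 1) ∧
      ∀ W : ℕ, ContinuousOn (fun p : Fin W → ℝ => ∑ i, s (p i))
        {p : Fin W → ℝ | (∀ i, 0 ≤ p i) ∧ (∑ i, p i) = 1} := by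
  obtain ⟨ha0, haR⟩ := ha
  set a' : ℝ := (a + R) / 2 with ha'def
  have ha'0 : 0 < a' := by positivity
  have haa' : a < a' := by simp only [ha'def]; linarith
  have ha'R : a' < R := by simp only [ha'def]; linarith
  set c : ℕ → ℝ := fun k => (T ^ (k + 1)).trace / (k + 1) with hc
  have hsum' : Summable (fun k => |c k * a' ^ (k + 1)|) := by
    rw [summable_abs_iff]
    exact hsum a' ⟨le_of_lt ha'0, ha'R⟩
  have hgcont : ContinuousOn (fun x : ℝ => ∑' k : ℕ, c k * x ^ (k + 1))
      (Set.Icc (-a') a') := by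
    apply continuousOn_tsum (u := fun k => |c k * a' ^ (k + 1)|)
    · intro k
      exact (continuous_const.mul ((continuous_id.pow (k + 1)))).continuousOn
    · exact hsum'
    · intro k x hx
      rw [Real.norm_eq_abs, abs_mul, abs_mul, abs_pow, abs_pow]
      have hxa : |x| ≤ |a'| := by
        rw [abs_le, abs_of_pos ha'0]
        exact ⟨hx.1, hx.2⟩
      exact mul_le_mul_of_nonneg_left
        (pow_le_pow_left₀ (abs_nonneg x) hxa _) (abs_nonneg _)
  have hζcont : ContinuousOn ζ (Set.Icc (-a') a') := by
    have : ζ = fun x => Real.exp (∑' k : ℕ, c k * x ^ (k + 1)) := funext hζ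
    rw [this]
    exact Real.continuous_exp.comp_continuousOn hgcont
  have hscont : ContinuousOn s (Set.Icc (0 : ℝ) 1) := by
    have hseq : s = fun p => p * (ζ a + 1 - ζ (a * p) - p) / (1 + a * deriv ζ a) :=
      funext hs
    rw [hseq]
    apply ContinuousOn.div_const
    apply ContinuousOn.mul continuousOn_id
    apply ContinuousOn.sub _ continuousOn_id
    apply ContinuousOn.sub continuousOn_const
    apply hζcont.comp (continuous_const.mul continuous_id).continuousOn
    intro p hp
    show -a' ≤ a * p ∧ a * p ≤ a'
    constructor
    · nlinarith [hp.1, hp.2]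
    · nlinarith [hp.1, hp.2]
  refine ⟨hscont, fun W => ?_⟩
  apply continuousOn_finset_sum
  intro i _
  apply hscont.comp (continuous_apply i).continuousOn
  intro p hp
  obtain ⟨hp0, hp1⟩ := hp
  refine ⟨hp0 i, ?_⟩
  calc p i ≤ ∑ j, p j := Finset.single_le_sum (fun j _ => hp0 j) (Finset.mem_univ i)
    _ = 1 := hp1
end

section
/- The function h(p) = 1 + ζ(a) − 2p − ζ(a·p) − a·p·ζ'(a·p) is strictly decreasing on [0,1]: its derivative h'(p) = −2 − 2a·ζ'(a·p) − a²·p·ζ''(a·p) is strictly negative for every p ∈ [0,1]. -/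
open Real Filter

private lemma aux_abs_summable {e : ℕ → ℝ} (he : ∀ k, 0 ≤ e k) {R : ℝ}
    (hs : ∀ r ∈ Set.Ico (0:ℝ) R, Summable fun k => e k * r ^ k)
    {x : ℝ} (hx : |x| < R) : Summable fun k => e k * x ^ k := by
  have h1 : Summable fun k => e k * |x| ^ k := hs _ ⟨abs_nonneg x, hx⟩
  refine h1.of_norm_bounded fun k => ?_
  rw [norm_mul, norm_pow, Real.norm_eq_abs, Real.norm_eq_abs,
    abs_of_nonneg (he k)]

private lemma aux_shift {e : ℕ → ℝ} (he : ∀ k, 0 ≤ e k) {R : ℝ} (hR : 0 < R)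
    (hs : ∀ r ∈ Set.Ico (0:ℝ) R, Summable fun k => e k * r ^ k) :
    ∀ r ∈ Set.Ico (0:ℝ) R,
      Summable fun k : ℕ => ((k : ℝ) + 1) * e (k + 1) * r ^ k := by
  intro r hr
  set r' : ℝ := (r + R) / 2 with hr'def
  have hr0 : 0 ≤ r := hr.1
  have hrr' : r < r' := by simp only [hr'def]; linarith [hr.2]
  have hr'R : r' < R := by simp only [hr'def]; linarith [hr.2]
  have hr'0 : 0 < r' := lt_of_le_of_lt hr0 hrr'
  have hsum' : Summable fun k => e k * r' ^ k := hs r' ⟨le_of_lt hr'0, hr'R⟩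
  set M : ℝ := ∑' k, e k * r' ^ k with hM
  have hterm : ∀ k, e k * r' ^ k ≤ M := fun k =>
    hsum'.le_tsum k fun j _ => mul_nonneg (he j) (pow_nonneg (le_of_lt hr'0) j)
  set t : ℝ := r / r' with ht
  have ht0 : 0 ≤ t := div_nonneg hr0 (le_of_lt hr'0)
  have ht1 : t < 1 := (div_lt_one hr'0).2 hrr'
  have hmaj : Summable fun k : ℕ => (M / r') * (((k : ℝ) + 1) * t ^ k) := by
    apply Summable.mul_left
    have h1 : Summable fun k : ℕ => (k : ℝ) ^ 1 * t ^ k :=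
      summable_pow_mul_geometric_of_norm_lt_one 1 (by rwa [Real.norm_eq_abs, abs_of_nonneg ht0])
    have h2 : Summable fun k : ℕ => t ^ k := summable_geometric_of_lt_one ht0 ht1
    simpa [add_mul, pow_one] using h1.add h2
  refine hmaj.of_nonneg_of_le (fun k => by have := he (k+1); positivity) fun k => ?_
  have hx : r ^ k = t ^ k * r' ^ k := by
    rw [← mul_pow, ht, div_mul_cancel₀]; exact ne_of_gt hr'0
  have h1 : e (k + 1) * r' ^ k ≤ M / r' := by
    rw [le_div_iff₀ hr'0]
    calc e (k + 1) * r' ^ k * r' = e (k + 1) * r' ^ (k + 1) := by ring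
      _ ≤ M := hterm (k + 1)
  calc ((k : ℝ) + 1) * e (k + 1) * r ^ k
      = (((k : ℝ) + 1) * t ^ k) * (e (k + 1) * r' ^ k) := by rw [hx]; ring
    _ ≤ (((k : ℝ) + 1) * t ^ k) * (M / r') := by
        apply mul_le_mul_of_nonneg_left h1 (by positivity)
    _ = (M / r') * (((k : ℝ) + 1) * t ^ k) := by ring

private lemma aux_hasDerivAt {e : ℕ → ℝ} (he : ∀ k, 0 ≤ e k) {R : ℝ} (hR : 0 < R)
    (hs : ∀ r ∈ Set.Ico (0:ℝ) R, Summable fun k => e k * r ^ k)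
    {x : ℝ} (hx : |x| < R) :
    HasDerivAt (fun y => ∑' k : ℕ, e k * y ^ k)
      (∑' k : ℕ, ((k : ℝ) + 1) * e (k + 1) * x ^ k) x := by
  set r : ℝ := (|x| + R) / 2 with hrdef
  have hxr : |x| < r := by simp only [hrdef]; linarith
  have hrR : r < R := by simp only [hrdef]; linarith [abs_nonneg x]
  have hr0 : 0 < r := lt_of_le_of_lt (abs_nonneg x) hxr
  set u : ℕ → ℝ := fun n => (n : ℝ) * e n * r ^ (n - 1) with hu
  have hu_sum : Summable u := by
    rw [← summable_nat_add_iff 1]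
    have := aux_shift he hR hs r ⟨le_of_lt hr0, hrR⟩
    apply this.congr
    intro k
    simp [hu, Nat.cast_add]
  set g : ℕ → ℝ → ℝ := fun n y => e n * y ^ n with hg
  set g' : ℕ → ℝ → ℝ := fun n y => e n * ((n : ℝ) * y ^ (n - 1)) with hg'
  have key : HasDerivAt (fun z => ∑' n, g n z) (∑' n, g' n x) x := by
    refine hasDerivAt_tsum_of_isPreconnected hu_sum Metric.isOpen_ball
      (convex_ball (0:ℝ) r).isPreconnected
      (fun n y _ => ((hasDerivAt_pow n y).const_mul (e n))) (fun n y hy => ?_)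
      (by simpa [Real.dist_eq] using hxr) (aux_abs_summable he hs hx) (by simpa [Real.dist_eq] using hxr)
    · have hy' : |y| ≤ r := by
        have := Metric.mem_ball.1 hy
        rw [Real.dist_eq, sub_zero] at this
        exact le_of_lt this
      simp only [hg', hu, Real.norm_eq_abs]
      rw [abs_mul, abs_mul, abs_of_nonneg (he n), abs_of_nonneg (by positivity : (0:ℝ) ≤ (n:ℝ))]
      have : |y| ^ (n-1) ≤ r ^ (n-1) := pow_le_pow_left₀ (abs_nonneg y) hy' _
      calc e n * ((n:ℝ) * |y ^ (n-1)|) = (n:ℝ) * e n * |y| ^ (n-1) := by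
            rw [abs_pow]; ring
        _ ≤ (n:ℝ) * e n * r ^ (n-1) := by
            apply mul_le_mul_of_nonneg_left this (mul_nonneg (Nat.cast_nonneg n) (he n))
  have hgsum : Summable fun n => g' n x := by
    refine hu_sum.of_norm_bounded fun n => ?_
    simp only [hg', hu, Real.norm_eq_abs]
    rw [abs_mul, abs_mul, abs_of_nonneg (he n),
      abs_of_nonneg (by positivity : (0:ℝ) ≤ (n:ℝ)), abs_pow]
    calc e n * ((n:ℝ) * |x| ^ (n-1)) = (n:ℝ) * e n * |x| ^ (n-1) := by ring
      _ ≤ (n:ℝ) * e n * r ^ (n-1) := by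
          apply mul_le_mul_of_nonneg_left
            (pow_le_pow_left₀ (abs_nonneg x) (le_of_lt hxr) _)
            (mul_nonneg (Nat.cast_nonneg n) (he n))
  have hshift : (∑' n, g' n x) = ∑' k : ℕ, ((k : ℝ) + 1) * e (k + 1) * x ^ k := by
    rw [hgsum.tsum_eq_zero_add]
    simp only [hg', Nat.cast_zero, zero_mul, mul_zero, zero_add]
    apply tsum_congr
    intro k
    push_cast
    ring
  rw [← hshift]
  exact key



/-- The function h(p) = 1 + ζ(a) − 2p − ζ(a·p) − a·p·ζ'(a·p) is strictly
decreasing on [0,1]: its derivative h'(p) = −2 − 2a·ζ'(a·p) − a²·p·ζ''(a·p) is strictly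
negative for every p ∈ [0,1]. -/
theorem ihara_h_strictAnti
    (n : ℕ) (hn : 0 < n) (T : Matrix (Fin n) (Fin n) ℝ)
    (hT : ∀ i j, 0 ≤ T i j) (htr : T.trace = 0)
    (R : ℝ) (hR : 0 < R)
    (hsum : ∀ x ∈ Set.Ico (0 : ℝ) R,
      Summable (fun k : ℕ => (T ^ (k + 1)).trace / (k + 1) * x ^ (k + 1)))
    (ζ : ℝ → ℝ)
    (hζ : ∀ x : ℝ, ζ x = Real.exp (∑' k : ℕ, (T ^ (k + 1)).trace / (k + 1) * x ^ (k + 1)))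
    (a : ℝ) (ha : a ∈ Set.Ioo (0 : ℝ) R)
    (h : ℝ → ℝ)
    (hh : ∀ p : ℝ, h p = 1 + ζ a - 2 * p - ζ (a * p) - a * p * deriv ζ (a * p)) :
    (∀ p ∈ Set.Icc (0 : ℝ) 1,
        deriv h p = -2 - 2 * a * deriv ζ (a * p) - a ^ 2 * p * deriv (deriv ζ) (a * p) ∧
          deriv h p < 0) ∧
      StrictAntiOn h (Set.Icc (0 : ℝ) 1) := by
  -- entries of powers are nonnegative, hence traces are nonnegative
  have hpow : ∀ m : ℕ, ∀ i j, 0 ≤ (T ^ m) i j := by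
    intro m
    induction m with
    | zero => intro i j; rw [pow_zero]; by_cases hij : i = j <;>
        simp [Matrix.one_apply, hij]
    | succ m ih =>
        intro i j
        rw [pow_succ, Matrix.mul_apply]
        exact Finset.sum_nonneg fun l _ => mul_nonneg (ih i l) (hT l j)
  have htrace : ∀ m : ℕ, 0 ≤ (T ^ m).trace := fun m =>
    Finset.sum_nonneg fun i _ => hpow m i i
  -- the coefficient sequence
  set e : ℕ → ℝ := fun k => if k = 0 then 0 else (T ^ k).trace / k with hedef
  have he : ∀ k, 0 ≤ e k := by
    intro k
    simp only [hedef]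
    split
    · exact le_refl 0
    · exact div_nonneg (htrace k) (Nat.cast_nonneg k)
  have he0 : e 0 = 0 := by simp [hedef]
  have heS : ∀ k : ℕ, e (k + 1) = (T ^ (k + 1)).trace / ((k : ℝ) + 1) := by
    intro k; simp [hedef]
  have hs : ∀ r ∈ Set.Ico (0:ℝ) R, Summable fun k => e k * r ^ k := by
    intro r hr
    rw [← summable_nat_add_iff 1]
    apply (hsum r hr).congr
    intro k
    rw [heS k]
  -- first and second derivative coefficient sequences
  set e1 : ℕ → ℝ := fun k => ((k : ℝ) + 1) * e (k + 1) with he1def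
  have he1 : ∀ k, 0 ≤ e1 k := fun k =>
    mul_nonneg (by positivity) (he (k + 1))
  have hs1 : ∀ r ∈ Set.Ico (0:ℝ) R, Summable fun k => e1 k * r ^ k :=
    aux_shift he hR hs
  set e2 : ℕ → ℝ := fun k => ((k : ℝ) + 1) * e1 (k + 1) with he2def
  have he2 : ∀ k, 0 ≤ e2 k := fun k =>
    mul_nonneg (by positivity) (he1 (k + 1))
  set g1 : ℝ → ℝ := fun x => ∑' k : ℕ, e1 k * x ^ k with hg1def
  set g2 : ℝ → ℝ := fun x => ∑' k : ℕ, e2 k * x ^ k with hg2def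
  set f : ℝ → ℝ := fun x => ∑' k : ℕ, (T ^ (k + 1)).trace / (k + 1) * x ^ (k + 1)
    with hfdef
  have hζf : ζ = fun x => Real.exp (f x) := funext hζ
  -- f agrees with the power series ∑ e k x^k on the ball
  have hfS : ∀ x : ℝ, |x| < R → f x = ∑' k : ℕ, e k * x ^ k := by
    intro x hx
    rw [(aux_abs_summable he hs hx).tsum_eq_zero_add, he0, zero_mul, zero_add]
    apply tsum_congr
    intro k
    rw [heS k]
  -- derivative of f
  have hf' : ∀ x : ℝ, |x| < R → HasDerivAt f (g1 x) x := by
    intro x hx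
    have key := aux_hasDerivAt he hR hs hx
    apply key.congr_of_eventuallyEq
    filter_upwards [Metric.isOpen_ball.mem_nhds
      (show x ∈ Metric.ball (0:ℝ) R by simpa [Real.dist_eq] using hx)] with y hy
    exact hfS y (by simpa [Real.dist_eq] using Metric.mem_ball.1 hy)
  have hg1' : ∀ x : ℝ, |x| < R → HasDerivAt g1 (g2 x) x := fun x hx =>
    aux_hasDerivAt he1 hR hs1 hx
  -- derivative of ζ
  have hζ' : ∀ x : ℝ, |x| < R → HasDerivAt ζ (g1 x * ζ x) x := by
    intro x hx
    have := (hf' x hx).exp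
    rw [hζf]
    simpa [mul_comm] using this
  have hdζ : ∀ x : ℝ, |x| < R → deriv ζ x = g1 x * ζ x := fun x hx =>
    (hζ' x hx).deriv
  -- second derivative of ζ
  have hζ'' : ∀ x : ℝ, |x| < R →
      HasDerivAt (deriv ζ) (g2 x * ζ x + g1 x * (g1 x * ζ x)) x := by
    intro x hx
    have hG : HasDerivAt (fun y => g1 y * ζ y) (g2 x * ζ x + g1 x * (g1 x * ζ x)) x :=
      (hg1' x hx).mul (hζ' x hx)
    apply hG.congr_of_eventuallyEq
    filter_upwards [Metric.isOpen_ball.mem_nhds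
      (show x ∈ Metric.ball (0:ℝ) R by simpa [Real.dist_eq] using hx)] with y hy
    exact hdζ y (by simpa [Real.dist_eq] using Metric.mem_ball.1 hy)
  have hddζ : ∀ x : ℝ, |x| < R →
      deriv (deriv ζ) x = g2 x * ζ x + g1 x * (g1 x * ζ x) := fun x hx =>
    (hζ'' x hx).deriv
  -- positivity facts
  have hζpos : ∀ x : ℝ, 0 < ζ x := fun x => by rw [hζ x]; exact Real.exp_pos _
  have hg1nn : ∀ x : ℝ, 0 ≤ x → 0 ≤ g1 x := fun x hx =>
    tsum_nonneg fun k => mul_nonneg (he1 k) (pow_nonneg hx k)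
  have hg2nn : ∀ x : ℝ, 0 ≤ x → 0 ≤ g2 x := fun x hx =>
    tsum_nonneg fun k => mul_nonneg (he2 k) (pow_nonneg hx k)
  have hdζnn : ∀ x : ℝ, 0 ≤ x → x < R → 0 ≤ deriv ζ x := by
    intro x hx hxR
    rw [hdζ x (by rwa [abs_of_nonneg hx])]
    exact mul_nonneg (hg1nn x hx) (le_of_lt (hζpos x))
  have hddζnn : ∀ x : ℝ, 0 ≤ x → x < R → 0 ≤ deriv (deriv ζ) x := by
    intro x hx hxR
    rw [hddζ x (by rwa [abs_of_nonneg hx])]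
    have := hg1nn x hx
    have := hg2nn x hx
    have := le_of_lt (hζpos x)
    positivity
  -- the derivative of h on [0,1]
  obtain ⟨ha0, haR⟩ := ha
  have hap : ∀ p : ℝ, p ∈ Set.Icc (0:ℝ) 1 → 0 ≤ a * p ∧ a * p < R := by
    intro p hp
    constructor
    · exact mul_nonneg (le_of_lt ha0) hp.1
    · calc a * p ≤ a * 1 := mul_le_mul_of_nonneg_left hp.2 (le_of_lt ha0)
        _ = a := mul_one a
        _ < R := haR
  have HD : ∀ p ∈ Set.Icc (0:ℝ) 1, HasDerivAt h
      (-2 - 2 * a * deriv ζ (a * p) - a ^ 2 * p * deriv (deriv ζ) (a * p)) p := by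
    intro p hp
    obtain ⟨hap0, hapR⟩ := hap p hp
    have habs : |a * p| < R := by rwa [abs_of_nonneg hap0]
    have dz : HasDerivAt ζ (deriv ζ (a * p)) (a * p) :=
      (hζ' _ habs).differentiableAt.hasDerivAt
    have ddz : HasDerivAt (deriv ζ) (deriv (deriv ζ) (a * p)) (a * p) :=
      (hζ'' _ habs).differentiableAt.hasDerivAt
    have c1 : HasDerivAt (fun q : ℝ => a * q) a p := by
      simpa using (hasDerivAt_id p).const_mul a
    have c2 : HasDerivAt (fun q : ℝ => ζ (a * q)) (deriv ζ (a * p) * a) p :=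
      HasDerivAt.comp p dz c1
    have c3 : HasDerivAt (fun q : ℝ => deriv ζ (a * q))
        (deriv (deriv ζ) (a * p) * a) p := HasDerivAt.comp p ddz c1
    have c4 : HasDerivAt (fun q : ℝ => a * q * deriv ζ (a * q))
        (a * deriv ζ (a * p) + a * p * (deriv (deriv ζ) (a * p) * a)) p :=
      c1.mul c3
    have c5 : HasDerivAt (fun q : ℝ => 2 * q) 2 p := by
      simpa using (hasDerivAt_id p).const_mul 2
    have hhfun : h = fun q : ℝ =>
        1 + ζ a - 2 * q - ζ (a * q) - a * q * deriv ζ (a * q) := funext hh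
    rw [hhfun]
    have total := (((hasDerivAt_const p (1 + ζ a)).sub c5).sub c2).sub c4
    exact total.congr_deriv (by ring)
  constructor
  · intro p hp
    obtain ⟨hap0, hapR⟩ := hap p hp
    have hd := (HD p hp).deriv
    refine ⟨hd, ?_⟩
    rw [hd]
    have h1 : 0 ≤ 2 * a * deriv ζ (a * p) :=
      mul_nonneg (by linarith) (hdζnn _ hap0 hapR)
    have h2 : 0 ≤ a ^ 2 * p * deriv (deriv ζ) (a * p) :=
      mul_nonneg (mul_nonneg (by positivity) hp.1) (hddζnn _ hap0 hapR)
    linarith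
  · apply strictAntiOn_of_deriv_neg (convex_Icc (0:ℝ) 1)
    · intro p hp
      exact (HD p hp).continuousAt.continuousWithinAt
    · intro p hp
      rw [interior_Icc] at hp
      have hp' : p ∈ Set.Icc (0:ℝ) 1 := ⟨le_of_lt hp.1, le_of_lt hp.2⟩
      obtain ⟨hap0, hapR⟩ := hap p hp'
      rw [(HD p hp').deriv]
      have h1 : 0 ≤ 2 * a * deriv ζ (a * p) :=
        mul_nonneg (by linarith) (hdζnn _ hap0 hapR)
      have h2 : 0 ≤ a ^ 2 * p * deriv (deriv ζ) (a * p) :=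
        mul_nonneg (mul_nonneg (by positivity) hp'.1) (hddζnn _ hap0 hapR)
      linarith
end

section
/- The function h(p) = 1 + ζ(a) − 2p − ζ(a·p) − a·p·ζ'(a·p) satisfies h(0) = ζ(a) > 0 and h(1) = −1 − a·ζ'(a) < 0; consequently there exists a unique c ∈ (0,1) with h(c) = 0. -/
open Set Real

set_option maxHeartbeats 1000000


/-- h(0) = ζ(a) > 0 and h(1) = −1 − a·ζ'(a) < 0; consequently there is a
unique c ∈ (0,1) with h(c) = 0. -/
theorem ihara_h_unique_root
    (n : ℕ) (hn : 0 < n) (T : Matrix (Fin n) (Fin n) ℝ)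
    (hT : ∀ i j, 0 ≤ T i j) (htr : T.trace = 0)
    (R : ℝ) (hR : 0 < R)
    (hsum : ∀ x ∈ Set.Ico (0 : ℝ) R,
      Summable (fun k : ℕ => (T ^ (k + 1)).trace / (k + 1) * x ^ (k + 1)))
    (ζ : ℝ → ℝ)
    (hζ : ∀ x : ℝ, ζ x = Real.exp (∑' k : ℕ, (T ^ (k + 1)).trace / (k + 1) * x ^ (k + 1)))
    (a : ℝ) (ha : a ∈ Set.Ioo (0 : ℝ) R)
    (h : ℝ → ℝ)
    (hh : ∀ p : ℝ, h p = 1 + ζ a - 2 * p - ζ (a * p) - a * p * deriv ζ (a * p)) :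
    (h 0 = ζ a ∧ 0 < h 0) ∧ (h 1 = -1 - a * deriv ζ a ∧ h 1 < 0) ∧
      ∃! c : ℝ, c ∈ Set.Ioo (0 : ℝ) 1 ∧ h c = 0 := by
  obtain ⟨ha0, haR⟩ := ha
  -- coefficients
  set c : ℕ → ℝ := fun k => (T ^ (k + 1)).trace / (k + 1) with hc_def
  have hTpow : ∀ m : ℕ, ∀ i j, 0 ≤ (T ^ m) i j := by
    intro m
    induction m with
    | zero => intro i j; rw [pow_zero]; rw [Matrix.one_apply]; positivity
    | succ m ih =>
      intro i j
      rw [pow_succ, Matrix.mul_apply]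
      exact Finset.sum_nonneg fun k _ => mul_nonneg (ih i k) (hT k j)
  have hc : ∀ k, 0 ≤ c k := by
    intro k
    apply div_nonneg _ (by positivity)
    exact Finset.sum_nonneg fun i _ => hTpow (k + 1) i i
  have hsum' : ∀ x ∈ Set.Ico (0 : ℝ) R, Summable (fun k : ℕ => c k * x ^ (k + 1)) := hsum
  -- intermediate radii
  set b : ℝ := a + (R - a) / 3 with hb_def
  set m : ℝ := a + 2 * ((R - a) / 3) with hm_def
  have hab : a < b := by rw [hb_def]; linarith
  have hbm : b < m := by rw [hb_def, hm_def]; linarith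
  have hmR : m < R := by rw [hm_def]; linarith
  have hb0 : 0 < b := lt_trans ha0 hab
  have hm0 : 0 < m := lt_trans hb0 hbm
  have hsm : Summable (fun k : ℕ => c k * m ^ (k + 1)) := hsum' m ⟨le_of_lt hm0, hmR⟩
  -- summable derivative bound
  set u : ℕ → ℝ := fun k => c k * ((k + 1 : ℝ) * b ^ k) with hu_def
  have hbm1 : b / m < 1 := (div_lt_one hm0).mpr hbm
  have hbm0 : 0 ≤ b / m := le_of_lt (div_pos hb0 hm0)
  have hgeo : Summable (fun k : ℕ => (k + 1 : ℝ) * (b / m) ^ k) := by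
    have h1 : Summable (fun k : ℕ => (k : ℝ) * (b / m) ^ k) := by
      simpa using summable_pow_mul_geometric_of_norm_lt_one 1
        (r := b / m) (by rw [Real.norm_eq_abs, abs_of_nonneg hbm0]; exact hbm1)
    have h2 : Summable (fun k : ℕ => (b / m) ^ k) :=
      summable_geometric_of_lt_one hbm0 hbm1
    simpa [add_mul] using h1.add h2
  set C : ℝ := ∑' k : ℕ, (k + 1 : ℝ) * (b / m) ^ k with hC_def
  have hCle : ∀ k : ℕ, (k + 1 : ℝ) * (b / m) ^ k ≤ C :=
    fun k => Summable.le_tsum hgeo k (fun j _ => by positivity)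
  have hu : Summable u := by
    refine Summable.of_nonneg_of_le ?_ ?_ (hsm.mul_right (C / m))
    · intro k
      have := hc k
      positivity
    · intro k
      have hbk : b ^ k = (b / m) ^ k * m ^ k := by
        rw [div_pow, div_mul_cancel₀]
        positivity
      have hmk : (0:ℝ) ≤ m ^ k := by positivity
      have h1 : (k + 1 : ℝ) * b ^ k ≤ C * m ^ k := by
        rw [hbk, ← mul_assoc]
        exact mul_le_mul_of_nonneg_right (hCle k) hmk
      have : c k * ((k + 1 : ℝ) * b ^ k) ≤ c k * (C * m ^ k) :=
        mul_le_mul_of_nonneg_left h1 (hc k)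
      calc c k * ((k + 1 : ℝ) * b ^ k) ≤ c k * (C * m ^ k) := this
        _ = c k * m ^ (k + 1) * (C / m) := by
            field_simp
            ring
  -- the series functions
  set F : ℝ → ℝ := fun x => ∑' k : ℕ, c k * x ^ (k + 1) with hF_def
  set F' : ℝ → ℝ := fun x => ∑' k : ℕ, c k * ((k + 1 : ℝ) * x ^ k) with hF'_def
  have hζF : ζ = fun x => Real.exp (F x) := funext fun x => hζ x
  -- derivative of F on Ioo (-b) b
  have hsum0 : Summable (fun k : ℕ => c k * (0:ℝ) ^ (k + 1)) := by
    apply summable_of_isBigO_nat summable_zero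
    apply Asymptotics.isBigO_of_le
    intro k
    simp
  have hg : ∀ (k : ℕ) (y : ℝ), y ∈ Set.Ioo (-b) b →
      HasDerivAt (fun z : ℝ => c k * z ^ (k + 1)) (c k * ((k + 1 : ℝ) * y ^ k)) y := by
    intro k y _
    have := (hasDerivAt_pow (k + 1) y).const_mul (c k)
    simpa [Nat.cast_add, Nat.cast_one] using this
  have hg' : ∀ (k : ℕ) (y : ℝ), y ∈ Set.Ioo (-b) b →
      ‖c k * ((k + 1 : ℝ) * y ^ k)‖ ≤ u k := by
    intro k y hy
    rw [Real.norm_eq_abs, abs_mul, abs_mul, abs_of_nonneg (hc k),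
      abs_of_nonneg (by positivity : (0:ℝ) ≤ (k + 1 : ℝ)), abs_pow]
    have hyb : |y| ≤ b := by
      rw [abs_le]
      exact ⟨le_of_lt hy.1, le_of_lt hy.2⟩
    have : |y| ^ k ≤ b ^ k := pow_le_pow_left₀ (abs_nonneg y) hyb k
    have h2 : (k + 1 : ℝ) * |y| ^ k ≤ (k + 1 : ℝ) * b ^ k :=
      mul_le_mul_of_nonneg_left this (by positivity)
    exact mul_le_mul_of_nonneg_left h2 (hc k)
  have hFderiv : ∀ x ∈ Set.Ioo (-b) b, HasDerivAt F (F' x) x := by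
    intro x hx
    exact hasDerivAt_tsum_of_isPreconnected hu isOpen_Ioo isPreconnected_Ioo
      hg hg' (y₀ := 0) ⟨by linarith, hb0⟩ hsum0 hx
  -- derivative of ζ
  have hζderiv : ∀ x ∈ Set.Ioo (-b) b, deriv ζ x = Real.exp (F x) * F' x := by
    intro x hx
    rw [hζF]
    exact ((hFderiv x hx).exp).deriv
  -- nonnegativity and monotonicity
  have hF'nonneg : ∀ x : ℝ, 0 ≤ x → 0 ≤ F' x := by
    intro x hx
    exact tsum_nonneg fun k => mul_nonneg (hc k) (by positivity)
  have hFnonneg : ∀ x : ℝ, 0 ≤ x → 0 ≤ F x := by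
    intro x hx
    exact tsum_nonneg fun k => mul_nonneg (hc k) (by positivity)
  have hsumF' : ∀ x : ℝ, 0 ≤ x → x ≤ b → Summable (fun k : ℕ => c k * ((k + 1 : ℝ) * x ^ k)) := by
    intro x hx0 hxb
    apply Summable.of_nonneg_of_le (fun k => mul_nonneg (hc k) (by positivity)) _ hu
    intro k
    have : x ^ k ≤ b ^ k := pow_le_pow_left₀ hx0 hxb k
    exact mul_le_mul_of_nonneg_left (mul_le_mul_of_nonneg_left this (by positivity)) (hc k)
  have hFmono : ∀ x y : ℝ, 0 ≤ x → x ≤ y → y ≤ a → F x ≤ F y := by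
    intro x y hx0 hxy hya
    apply Summable.tsum_le_tsum _ (hsum' x ⟨hx0, lt_of_le_of_lt (le_trans hxy hya) haR⟩)
      (hsum' y ⟨le_trans hx0 hxy, lt_of_le_of_lt hya haR⟩)
    intro k
    exact mul_le_mul_of_nonneg_left (pow_le_pow_left₀ hx0 hxy (k + 1)) (hc k)
  have hF'mono : ∀ x y : ℝ, 0 ≤ x → x ≤ y → y ≤ a → F' x ≤ F' y := by
    intro x y hx0 hxy hya
    have hyb : y ≤ b := le_trans hya (le_of_lt hab)
    apply Summable.tsum_le_tsum _ (hsumF' x hx0 (le_trans hxy hyb)) (hsumF' y (le_trans hx0 hxy) hyb)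
    intro k
    exact mul_le_mul_of_nonneg_left
      (mul_le_mul_of_nonneg_left (pow_le_pow_left₀ hx0 hxy k) (by positivity)) (hc k)
  -- values at 0
  have hF0 : F 0 = 0 := by
    rw [hF_def]
    simp
  have hζ0 : ζ 0 = 1 := by rw [hζF]; simp [hF0]
  have hζpos : ∀ x, 0 < ζ x := fun x => by rw [hζF]; exact Real.exp_pos _
  -- membership facts
  have hmem : ∀ p : ℝ, 0 ≤ p → p ≤ 1 → a * p ∈ Set.Ioo (-b) b := by
    intro p hp0 hp1
    constructor
    · nlinarith
    · nlinarith
  -- part 1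
  have h0 : h 0 = ζ a := by
    rw [hh]
    simp [hζ0]
  have h0pos : 0 < h 0 := by rw [h0]; exact hζpos a
  -- part 2
  have hamem : a ∈ Set.Ioo (-b) b := by constructor <;> nlinarith
  have h1 : h 1 = -1 - a * deriv ζ a := by
    rw [hh]
    ring_nf
  have h1neg : h 1 < 0 := by
    rw [h1]
    have := hζderiv a hamem
    have h2 : 0 ≤ deriv ζ a := by
      rw [this]
      exact mul_nonneg (le_of_lt (Real.exp_pos _)) (hF'nonneg a (le_of_lt ha0))
    nlinarith
  -- strict antitonicity on Icc 0 1
  have hanti : ∀ p ∈ Set.Icc (0:ℝ) 1, ∀ q ∈ Set.Icc (0:ℝ) 1, p < q → h q < h p := by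
    intro p hp q hq hpq
    rw [hh, hh]
    have hap : a * p ∈ Set.Ioo (-b) b := hmem p hp.1 hp.2
    have haq : a * q ∈ Set.Ioo (-b) b := hmem q hq.1 hq.2
    have hdp := hζderiv _ hap
    have hdq := hζderiv _ haq
    have hps : a * p ≤ a * q := by nlinarith [hp.1, hp.2, hq.1, hq.2]
    have hqa : a * q ≤ a := by nlinarith [hq.1, hq.2]
    have hpa0 : 0 ≤ a * p := mul_nonneg (le_of_lt ha0) hp.1
    have hζm : ζ (a * p) ≤ ζ (a * q) := by
      rw [hζF]
      exact Real.exp_le_exp.mpr (hFmono _ _ hpa0 hps hqa)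
    have hterm : a * p * deriv ζ (a * p) ≤ a * q * deriv ζ (a * q) := by
      rw [hdp, hdq]
      have e1 : Real.exp (F (a * p)) ≤ Real.exp (F (a * q)) :=
        Real.exp_le_exp.mpr (hFmono _ _ hpa0 hps hqa)
      have e2 : F' (a * p) ≤ F' (a * q) := hF'mono _ _ hpa0 hps hqa
      have n1 : 0 ≤ F' (a * p) := hF'nonneg _ hpa0
      have n2 : (0:ℝ) < Real.exp (F (a * p)) := Real.exp_pos _
      have n3 : (0:ℝ) < Real.exp (F (a * q)) := Real.exp_pos _
      have inner : Real.exp (F (a * p)) * F' (a * p) ≤ Real.exp (F (a * q)) * F' (a * q) :=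
        mul_le_mul e1 e2 n1 n3.le
      exact mul_le_mul hps inner (mul_nonneg n2.le n1) (mul_nonneg ha0.le hq.1)
    nlinarith
  -- continuity of h on Icc 0 1
  have hcontF : ContinuousOn F (Set.Icc (-b) b) := by
    apply continuousOn_tsum (u := fun k => c k * b ^ (k + 1))
    · intro k; exact (continuous_const.mul (continuous_pow (k + 1))).continuousOn
    · exact hsum' b ⟨le_of_lt hb0, lt_trans hbm hmR⟩
    · intro k x hx
      rw [Real.norm_eq_abs, abs_mul, abs_of_nonneg (hc k), abs_pow]
      have : |x| ≤ b := abs_le.mpr ⟨hx.1, hx.2⟩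
      exact mul_le_mul_of_nonneg_left (pow_le_pow_left₀ (abs_nonneg x) this _) (hc k)
  have hcontF' : ContinuousOn F' (Set.Icc (-b) b) := by
    apply continuousOn_tsum (u := u)
    · intro k; exact (continuous_const.mul (continuous_const.mul (continuous_pow k))).continuousOn
    · exact hu
    · intro k x hx
      rw [Real.norm_eq_abs, abs_mul, abs_mul, abs_of_nonneg (hc k),
        abs_of_nonneg (by positivity : (0:ℝ) ≤ (k+1:ℝ)), abs_pow]
      have : |x| ≤ b := abs_le.mpr ⟨hx.1, hx.2⟩
      exact mul_le_mul_of_nonneg_left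
        (mul_le_mul_of_nonneg_left (pow_le_pow_left₀ (abs_nonneg x) this _) (by positivity)) (hc k)
  have hmaps : Set.MapsTo (fun p : ℝ => a * p) (Set.Icc (0:ℝ) 1) (Set.Icc (-b) b) := by
    intro p hp
    have e1 : 0 ≤ a * p := mul_nonneg ha0.le hp.1
    have e2 : a * p ≤ a := by nlinarith [hp.1, hp.2]
    simp only [Set.mem_Icc]
    constructor
    · linarith
    · linarith
  have hcont : ContinuousOn h (Set.Icc (0:ℝ) 1) := by
    have hca : ContinuousOn (fun p : ℝ => a * p) (Set.Icc (0:ℝ) 1) :=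
      (continuous_const.mul continuous_id).continuousOn
    have h1c : ContinuousOn (fun p : ℝ => F (a * p)) (Set.Icc (0:ℝ) 1) :=
      hcontF.comp hca hmaps
    have h2c : ContinuousOn (fun p : ℝ => F' (a * p)) (Set.Icc (0:ℝ) 1) :=
      hcontF'.comp hca hmaps
    have : ContinuousOn (fun p : ℝ => 1 + ζ a - 2 * p - Real.exp (F (a * p)) -
        a * p * (Real.exp (F (a * p)) * F' (a * p))) (Set.Icc (0:ℝ) 1) := by
      apply ContinuousOn.sub
      apply ContinuousOn.sub
      · exact (continuous_const.sub (continuous_const.mul continuous_id)).continuousOn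
      · exact h1c.rexp
      · exact (hca.mul (h1c.rexp.mul h2c))
    apply this.congr
    intro p hp
    rw [hh, hζderiv _ (hmem p hp.1 hp.2), hζF]
  -- existence via IVT
  have hivt : (0:ℝ) ∈ h '' Set.Ioo (0:ℝ) 1 := by
    apply intermediate_value_Ioo' (by norm_num) hcont
    exact ⟨h1neg, h0pos⟩
  obtain ⟨c₀, hc₀, hc₀0⟩ := hivt
  refine ⟨⟨h0, h0pos⟩, ⟨h1, h1neg⟩, ⟨c₀, ⟨hc₀, hc₀0⟩, ?_⟩⟩
  rintro d ⟨hd, hd0⟩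
  by_contra hne
  have hdIcc : d ∈ Set.Icc (0:ℝ) 1 := ⟨le_of_lt hd.1, le_of_lt hd.2⟩
  have hcIcc : c₀ ∈ Set.Icc (0:ℝ) 1 := ⟨le_of_lt hc₀.1, le_of_lt hc₀.2⟩
  rcases lt_or_gt_of_ne hne with hlt | hgt
  · have := hanti d hdIcc c₀ hcIcc hlt
    rw [hd0, hc₀0] at this
    exact lt_irrefl 0 this
  · have := hanti c₀ hcIcc d hdIcc hgt
    rw [hd0, hc₀0] at this
    exact lt_irrefl 0 this
end

section
/- (Theorem 1 of the paper.) There exists a point c ∈ (0,1) which is the unique global maximum of s on (0,1): s'(c) = 0, and for every p ∈ [0,1] with p ≠ c one has s(p) < s(c). -/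
open Set Real

private lemma iharaAux_summable {u : ℕ → ℝ} (hu : ∀ k, 0 ≤ u k) {x y : ℝ}
    (hx : 0 ≤ x) (hxy : x ≤ y) (hsy : Summable fun k => u k * y ^ (k + 1)) :
    Summable fun k => u k * x ^ (k + 1) :=
  Summable.of_nonneg_of_le (fun k => mul_nonneg (hu k) (pow_nonneg hx _))
    (fun k => mul_le_mul_of_nonneg_left (pow_le_pow_left₀ hx hxy _) (hu k)) hsy

private lemma iharaAux_mono {u : ℕ → ℝ} (hu : ∀ k, 0 ≤ u k) {x y : ℝ}
    (hx : 0 ≤ x) (hxy : x ≤ y) (hsy : Summable fun k => u k * y ^ (k + 1)) :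
    ∑' k, u k * x ^ (k + 1) ≤ ∑' k, u k * y ^ (k + 1) :=
  Summable.tsum_le_tsum (fun k => mul_le_mul_of_nonneg_left (pow_le_pow_left₀ hx hxy _) (hu k))
    (iharaAux_summable hu hx hxy hsy) hsy

private lemma iharaAux_convex {u : ℕ → ℝ} (hu : ∀ k, 0 ≤ u k) {x y t t' : ℝ}
    (hx : 0 ≤ x) (hy : 0 ≤ y) (ht : 0 ≤ t) (ht' : 0 ≤ t') (htt : t + t' = 1)
    (hsx : Summable fun k => u k * x ^ (k + 1)) (hsy : Summable fun k => u k * y ^ (k + 1)) :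
    ∑' k, u k * (t * x + t' * y) ^ (k + 1)
      ≤ t * ∑' k, u k * x ^ (k + 1) + t' * ∑' k, u k * y ^ (k + 1) := by
  have hterm : ∀ k : ℕ, u k * (t * x + t' * y) ^ (k + 1)
      ≤ t * (u k * x ^ (k + 1)) + t' * (u k * y ^ (k + 1)) := by
    intro k
    have hc := (convexOn_pow (𝕜 := ℝ) (k + 1)).2 (mem_Ici.2 hx) (mem_Ici.2 hy) ht ht' htt
    simp only [smul_eq_mul] at hc
    nlinarith [hu k, mul_le_mul_of_nonneg_left hc (hu k)]
  have hsr : Summable fun k => t * (u k * x ^ (k + 1)) + t' * (u k * y ^ (k + 1)) :=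
    (hsx.mul_left t).add (hsy.mul_left t')
  have hsl : Summable fun k => u k * (t * x + t' * y) ^ (k + 1) := by
    refine Summable.of_nonneg_of_le (fun k => mul_nonneg (hu k) (pow_nonneg ?_ _)) hterm hsr
    positivity
  calc ∑' k, u k * (t * x + t' * y) ^ (k + 1)
      ≤ ∑' k, (t * (u k * x ^ (k + 1)) + t' * (u k * y ^ (k + 1))) :=
        Summable.tsum_le_tsum hterm hsl hsr
    _ = t * ∑' k, u k * x ^ (k + 1) + t' * ∑' k, u k * y ^ (k + 1) := by
        rw [Summable.tsum_add (hsx.mul_left t) (hsy.mul_left t'), tsum_mul_left, tsum_mul_left]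

private lemma iharaAux_contOn {u : ℕ → ℝ} (hu : ∀ k, 0 ≤ u k) {a : ℝ} (ha : 0 ≤ a)
    (hsa : Summable fun k => u k * a ^ (k + 1)) :
    ContinuousOn (fun x => ∑' k, u k * x ^ (k + 1)) (Icc 0 a) := by
  refine continuousOn_tsum
    (fun k => (by fun_prop : Continuous fun x : ℝ => u k * x ^ (k + 1)).continuousOn)
    hsa (fun k x hx => ?_)
  rw [Real.norm_eq_abs, abs_mul, abs_of_nonneg (hu k), abs_pow, abs_of_nonneg hx.1]
  exact mul_le_mul_of_nonneg_left (pow_le_pow_left₀ hx.1 hx.2 _) (hu k)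

/-- Theorem 1 of the paper: There exists c ∈ (0,1) which is the unique
global maximum of s on (0,1): s'(c) = 0 and s(p) < s(c) for every p ∈ [0,1], p ≠ c. -/
theorem ihara_s_unique_global_max
    (n : ℕ) (hn : 0 < n) (T : Matrix (Fin n) (Fin n) ℝ)
    (hT : ∀ i j, 0 ≤ T i j) (htr : T.trace = 0)
    (R : ℝ) (hR : 0 < R)
    (hsum : ∀ x ∈ Set.Ico (0 : ℝ) R,
      Summable (fun k : ℕ => (T ^ (k + 1)).trace / (k + 1) * x ^ (k + 1)))
    (ζ : ℝ → ℝ)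
    (hζ : ∀ x : ℝ, ζ x = Real.exp (∑' k : ℕ, (T ^ (k + 1)).trace / (k + 1) * x ^ (k + 1)))
    (a : ℝ) (ha : a ∈ Set.Ioo (0 : ℝ) R)
    (s : ℝ → ℝ)
    (hs : ∀ p : ℝ, s p = p * (ζ a + 1 - ζ (a * p) - p) / (1 + a * deriv ζ a)) :
    ∃ c ∈ Set.Ioo (0 : ℝ) 1, deriv s c = 0 ∧
      ∀ p ∈ Set.Icc (0 : ℝ) 1, p ≠ c → s p < s c := by
  obtain ⟨ha0, haR⟩ := ha
  set u : ℕ → ℝ := fun k => (T ^ (k + 1)).trace / (k + 1) with hu_def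
  set F : ℝ → ℝ := fun x => ∑' k, u k * x ^ (k + 1) with hF_def
  -- nonnegativity of coefficients
  have hpow : ∀ m : ℕ, ∀ i j, 0 ≤ (T ^ (m + 1)) i j := by
    intro m
    induction m with
    | zero => simpa using hT
    | succ m ih =>
      intro i j
      rw [pow_succ, Matrix.mul_apply]
      exact Finset.sum_nonneg fun l _ => mul_nonneg (ih i l) (hT l j)
  have hu : ∀ k, 0 ≤ u k := by
    intro k
    have h1 : 0 ≤ (T ^ (k + 1)).trace := Finset.sum_nonneg fun i _ => hpow k i i
    exact div_nonneg h1 (by positivity)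
  have hζF : ∀ x, ζ x = Real.exp (F x) := hζ
  have hsa : Summable fun k => u k * a ^ (k + 1) := hsum a ⟨ha0.le, haR⟩
  -- ζ is monotone on [0, a]
  have hζmono : ∀ x y : ℝ, 0 ≤ x → x ≤ y → y ≤ a → ζ x ≤ ζ y := by
    intro x y hx hxy hya
    rw [hζF, hζF]
    exact Real.exp_le_exp.2 (iharaAux_mono hu hx hxy
      (iharaAux_summable hu (hx.trans hxy) hya hsa))
  -- φ p = ζ (a * p) is convex on [0,1]
  have hmaps : ∀ p : ℝ, p ∈ Icc (0 : ℝ) 1 → a * p ∈ Icc 0 a := by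
    intro p hp
    exact ⟨mul_nonneg ha0.le hp.1, by nlinarith [hp.2]⟩
  have hφconv : ConvexOn ℝ (Icc (0 : ℝ) 1) (fun p => ζ (a * p)) := by
    refine ⟨convex_Icc 0 1, fun x hx y hy t t' ht ht' htt => ?_⟩
    simp only [smul_eq_mul]
    have hax := hmaps x hx
    have hay := hmaps y hy
    have hsx : Summable fun k => u k * (a * x) ^ (k + 1) :=
      iharaAux_summable hu hax.1 hax.2 hsa
    have hsy : Summable fun k => u k * (a * y) ^ (k + 1) :=
      iharaAux_summable hu hay.1 hay.2 hsa
    have h1 : F (a * (t * x + t' * y)) ≤ t * F (a * x) + t' * F (a * y) := by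
      have heq : a * (t * x + t' * y) = t * (a * x) + t' * (a * y) := by ring
      rw [hF_def]
      simp only []
      rw [heq]
      exact iharaAux_convex hu hax.1 hay.1 ht ht' htt hsx hsy
    have h2 := convexOn_exp.2 (mem_univ (F (a * x))) (mem_univ (F (a * y))) ht ht' htt
    simp only [smul_eq_mul] at h2
    rw [hζF, hζF, hζF]
    calc Real.exp (F (a * (t * x + t' * y))) ≤ Real.exp (t * F (a * x) + t' * F (a * y)) :=
          Real.exp_le_exp.2 h1
      _ ≤ t * Real.exp (F (a * x)) + t' * Real.exp (F (a * y)) := h2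
  have hφmono : MonotoneOn (fun p => ζ (a * p)) (Icc (0 : ℝ) 1) := by
    intro x hx y hy hxy
    exact hζmono (a * x) (a * y) (hmaps x hx).1
      (mul_le_mul_of_nonneg_left hxy ha0.le) (hmaps y hy).2
  -- p * ζ (a p) is convex on [0,1]
  have hmul : ConvexOn ℝ (Icc (0 : ℝ) 1) (fun p => p * ζ (a * p)) := by
    have h1 : ConvexOn ℝ (Icc (0 : ℝ) 1) (fun p : ℝ => p) := convexOn_id (convex_Icc 0 1)
    exact h1.mul hφconv (fun x hx => hx.1)
      (fun x _ => (Real.exp_pos _).le.trans_eq (hζF (a * x)).symm)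
      ((monotoneOn_id).monovaryOn hφmono)
  -- quadratic part strictly concave
  have hquad : StrictConcaveOn ℝ (Icc (0 : ℝ) 1) (fun p => p * (ζ a + 1) - p ^ 2) := by
    refine ⟨convex_Icc 0 1, fun x _ y _ hxy t t' ht ht' htt => ?_⟩
    simp only [smul_eq_mul]
    have h0 : 0 < (x - y) ^ 2 := by
      have : x - y ≠ 0 := sub_ne_zero.2 hxy
      positivity
    nlinarith [mul_pos ht ht', mul_pos (mul_pos ht ht') h0]
  set g : ℝ → ℝ := fun p => p * (ζ a + 1) - p ^ 2 - p * ζ (a * p) with hg_def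
  have hgconc : StrictConcaveOn ℝ (Icc (0 : ℝ) 1) g := hquad.sub_convexOn hmul
  -- D > 0
  have hderiv_nonneg : 0 ≤ deriv ζ a := by
    by_cases hdiff : DifferentiableAt ℝ ζ a
    · have h := hasDerivAt_iff_tendsto_slope.1 hdiff.hasDerivAt
      have h' : Filter.Tendsto (slope ζ a) (nhdsWithin a (Ioi a)) (nhds (deriv ζ a)) :=
        h.mono_left (nhdsWithin_mono a fun x hx =>
          mem_compl_singleton_iff.mpr (ne_of_gt hx))
      refine ge_of_tendsto h' ?_
      filter_upwards [Ioo_mem_nhdsGT haR] with x hx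
      rw [slope_def_field]
      have hmono2 : ζ a ≤ ζ x := by
        rw [hζF, hζF]
        exact Real.exp_le_exp.2 (iharaAux_mono hu ha0.le hx.1.le
          (hsum x ⟨ha0.le.trans hx.1.le, hx.2⟩))
      exact div_nonneg (sub_nonneg.2 hmono2) (by linarith [hx.1])
    · rw [deriv_zero_of_not_differentiableAt hdiff]
  set D : ℝ := 1 + a * deriv ζ a with hD_def
  have hD : 0 < D := by
    have := mul_nonneg ha0.le hderiv_nonneg
    rw [hD_def]; linarith
  have hsg : ∀ p : ℝ, s p = g p / D := by
    intro p
    rw [hs p, hg_def, hD_def]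
    ring
  -- continuity of s on [0,1]
  have hFcont : ContinuousOn F (Icc 0 a) := iharaAux_contOn hu ha0.le hsa
  have hscont : ContinuousOn s (Icc (0 : ℝ) 1) := by
    have hc1 : ContinuousOn (fun p => F (a * p)) (Icc (0 : ℝ) 1) :=
      hFcont.comp ((continuous_const.mul continuous_id).continuousOn) hmaps
    have hc2 : ContinuousOn (fun p => ζ (a * p)) (Icc (0 : ℝ) 1) := by
      have hc := Real.continuous_exp.comp_continuousOn hc1
      exact hc.congr fun p _ => hζF (a * p)
    have hc3 : ContinuousOn g (Icc (0 : ℝ) 1) := by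
      rw [hg_def]
      exact (((continuous_id.mul continuous_const).sub (continuous_pow 2)).continuousOn).sub
        (continuous_id.continuousOn.mul hc2)
    exact (hc3.div_const D).congr fun p _ => hsg p
  -- maximum point c
  obtain ⟨c, hcmem, hmax⟩ := isCompact_Icc.exists_isMaxOn (nonempty_Icc.2 zero_le_one) hscont
  have hs0 : s 0 = 0 := by rw [hs]; ring
  have hs1 : s 1 = 0 := by rw [hs, mul_one]; ring
  have hshalf : 0 < s (1 / 2) := by
    rw [hs]
    have hζle : ζ (a * (1 / 2)) ≤ ζ a :=
      hζmono (a * (1 / 2)) a (by positivity) (by linarith) le_rfl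
    apply div_pos _ hD
    nlinarith
  have hchalf : 0 < s c := lt_of_lt_of_le hshalf (hmax (by norm_num : (1:ℝ)/2 ∈ Icc (0:ℝ) 1))
  have hc0 : c ≠ 0 := fun h => by rw [h, hs0] at hchalf; exact lt_irrefl 0 hchalf
  have hc1 : c ≠ 1 := fun h => by rw [h, hs1] at hchalf; exact lt_irrefl 0 hchalf
  have hcIoo : c ∈ Ioo (0 : ℝ) 1 :=
    ⟨lt_of_le_of_ne hcmem.1 (Ne.symm hc0), lt_of_le_of_ne hcmem.2 hc1⟩
  refine ⟨c, hcIoo, ?_, ?_⟩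
  · exact (hmax.isLocalMax (Icc_mem_nhds hcIoo.1 hcIoo.2)).deriv_eq_zero
  · intro p hp hpc
    by_contra hle
    push_neg at hle
    have hpe : s p = s c := le_antisymm (hmax hp) hle
    have hstrict := hgconc.2 hp hcmem hpc (by norm_num : (0:ℝ) < 1/2)
      (by norm_num : (0:ℝ) < 1/2) (by norm_num)
    simp only [smul_eq_mul] at hstrict
    have hmmem : (1 / 2 * p + 1 / 2 * c) ∈ Icc (0 : ℝ) 1 := by
      constructor
      · nlinarith [hp.1, hcmem.1]
      · nlinarith [hp.2, hcmem.2]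
    have hsm : s (1 / 2 * p + 1 / 2 * c) ≤ s c := hmax hmmem
    have hgp : g p = g c := by
      have h := hpe
      rw [hsg p, hsg c, div_eq_div_iff hD.ne' hD.ne'] at h
      exact mul_right_cancel₀ hD.ne' h
    have hgm : g (1 / 2 * p + 1 / 2 * c) ≤ g c := by
      have h := hsm
      rw [hsg _, hsg c, div_le_div_iff₀ hD hD] at h
      exact le_of_mul_le_mul_right h hD
    have hcon : g c < g c := by
      calc g c = 1 / 2 * g p + 1 / 2 * g c := by rw [hgp]; ring
        _ < g (1 / 2 * p + 1 / 2 * c) := hstrict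
        _ ≤ g c := hgm
    exact lt_irrefl _ hcon
end

section
/- (Third Shannon–Khinchin axiom for the Ihara entropy.) Let W ≥ 1 and let p₁,…,p_W be a probability distribution (pᵢ ≥ 0 for all i and ∑ᵢ pᵢ = 1). Then the Ihara entropy is maximized by the uniform distribution: ∑_{i=1}^W s(pᵢ) ≤ W·s(1/W). -/
open Topology Filter

lemma pow_entry_nonneg {n : ℕ} (T : Matrix (Fin n) (Fin n) ℝ)
    (hT : ∀ i j, 0 ≤ T i j) : ∀ k, 1 ≤ k → ∀ i j, 0 ≤ (T ^ k) i j := by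
  intro k hk
  induction k with
  | zero => omega
  | succ m ih =>
    intro i j
    rcases Nat.eq_or_lt_of_le (Nat.one_le_iff_ne_zero.mpr (Nat.succ_ne_zero m)) with h | h
    · rcases Nat.eq_zero_or_pos m with hm | hm
      · subst hm; simpa using hT i j
      · rw [pow_succ, Matrix.mul_apply]
        exact Finset.sum_nonneg fun l _ => mul_nonneg (ih hm i l) (hT l j)
    · rw [pow_succ, Matrix.mul_apply]
      have hm : 1 ≤ m := by omega
      exact Finset.sum_nonneg fun l _ => mul_nonneg (ih hm i l) (hT l j)

/-- Third Shannon–Khinchin axiom: For any probability distribution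
p₁,…,p_W the Ihara entropy satisfies ∑ᵢ s(pᵢ) ≤ W·s(1/W), i.e. the uniform
distribution maximizes the entropy. -/
theorem ihara_entropy_max_at_uniform
    (n : ℕ) (hn : 0 < n) (T : Matrix (Fin n) (Fin n) ℝ)
    (hT : ∀ i j, 0 ≤ T i j) (htr : T.trace = 0)
    (R : ℝ) (hR : 0 < R)
    (hsum : ∀ x ∈ Set.Ico (0 : ℝ) R,
      Summable (fun k : ℕ => (T ^ (k + 1)).trace / (k + 1) * x ^ (k + 1)))
    (ζ : ℝ → ℝ)
    (hζ : ∀ x : ℝ, ζ x = Real.exp (∑' k : ℕ, (T ^ (k + 1)).trace / (k + 1) * x ^ (k + 1)))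
    (a : ℝ) (ha : a ∈ Set.Ioo (0 : ℝ) R)
    (s : ℝ → ℝ)
    (hs : ∀ p : ℝ, s p = p * (ζ a + 1 - ζ (a * p) - p) / (1 + a * deriv ζ a))
    (W : ℕ) (hW : 1 ≤ W) (p : Fin W → ℝ)
    (hp : ∀ i, 0 ≤ p i) (hp1 : (∑ i, p i) = 1) :
    (∑ i, s (p i)) ≤ W * s (1 / W) := by
  set c : ℕ → ℝ := fun k => (T ^ (k + 1)).trace / (k + 1) with hc_def
  have hc : ∀ k, 0 ≤ c k := by
    intro k
    apply div_nonneg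
    · exact Finset.sum_nonneg fun i _ => pow_entry_nonneg T hT (k + 1) (by omega) i i
    · positivity
  set g : ℝ → ℝ := fun x => ∑' k : ℕ, c k * x ^ (k + 1) with hg_def
  have hζg : ∀ x, ζ x = Real.exp (g x) := hζ
  -- monotonicity of g on [0, R)
  have hgmono : MonotoneOn g (Set.Ico 0 R) := by
    intro x hx y hy hxy
    exact Summable.tsum_le_tsum
      (fun k => mul_le_mul_of_nonneg_left (pow_le_pow_left₀ hx.1 hxy _) (hc k))
      (hsum x hx) (hsum y hy)
  -- convexity of g on [0, R)
  have hgconv : ConvexOn ℝ (Set.Ico 0 R) g := by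
    refine ⟨convex_Ico 0 R, ?_⟩
    intro x hx y hy t u ht hu htu
    simp only [smul_eq_mul]
    have hmem : t * x + u * y ∈ Set.Ico (0 : ℝ) R := by
      have := (convex_Ico (0:ℝ) R) hx hy ht hu htu
      simpa using this
    have hterm : ∀ k : ℕ, c k * (t * x + u * y) ^ (k + 1)
        ≤ t * (c k * x ^ (k + 1)) + u * (c k * y ^ (k + 1)) := by
      intro k
      have hpc := (convexOn_pow (k + 1)).2 (Set.mem_Ici.mpr hx.1) (Set.mem_Ici.mpr hy.1)
        ht hu htu
      simp only [smul_eq_mul] at hpc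
      nlinarith [hc k, hpc]
    have hsums : Summable (fun k : ℕ => t * (c k * x ^ (k + 1)) + u * (c k * y ^ (k + 1))) :=
      ((hsum x hx).mul_left t).add ((hsum y hy).mul_left u)
    calc g (t * x + u * y) ≤ ∑' k : ℕ, (t * (c k * x ^ (k + 1)) + u * (c k * y ^ (k + 1))) :=
          Summable.tsum_le_tsum hterm (hsum _ hmem) hsums
      _ = t * g x + u * g y := by
          rw [Summable.tsum_add ((hsum x hx).mul_left t) ((hsum y hy).mul_left u),
            tsum_mul_left, tsum_mul_left]
  -- monotonicity and convexity of ζ on [0, R)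
  have hζmono : MonotoneOn ζ (Set.Ico 0 R) := by
    intro x hx y hy hxy
    rw [hζg, hζg]
    exact Real.exp_le_exp.2 (hgmono hx hy hxy)
  have hζconv : ConvexOn ℝ (Set.Ico 0 R) ζ := by
    refine ⟨convex_Ico 0 R, ?_⟩
    intro x hx y hy t u ht hu htu
    simp only [smul_eq_mul]
    have hmem : t * x + u * y ∈ Set.Ico (0 : ℝ) R := by
      have := (convex_Ico (0:ℝ) R) hx hy ht hu htu
      simpa using this
    have h1 : g (t * x + u * y) ≤ t * g x + u * g y := by
      have := hgconv.2 hx hy ht hu htu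
      simpa using this
    have h2 : Real.exp (t * g x + u * g y) ≤ t * Real.exp (g x) + u * Real.exp (g y) := by
      have := convexOn_exp.2 (Set.mem_univ (g x)) (Set.mem_univ (g y)) ht hu htu
      simpa using this
    calc ζ (t * x + u * y) = Real.exp (g (t * x + u * y)) := hζg _
      _ ≤ Real.exp (t * g x + u * g y) := Real.exp_le_exp.2 h1
      _ ≤ t * Real.exp (g x) + u * Real.exp (g y) := h2
      _ = t * ζ x + u * ζ y := by rw [hζg, hζg]
  -- the derivative of ζ at a is nonnegative
  have hderiv : 0 ≤ deriv ζ a := by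
    by_cases hd : DifferentiableAt ℝ ζ a
    · have hda := hd.hasDerivAt
      rw [hasDerivAt_iff_tendsto_slope] at hda
      have hle : 𝓝[>] a ≤ 𝓝[≠] a := nhdsWithin_mono _ fun y hy => ne_of_gt hy
      refine ge_of_tendsto (hda.mono_left hle) ?_
      filter_upwards [Ioo_mem_nhdsGT_of_mem (Set.mem_Ico.mpr ⟨le_refl a, ha.2⟩)] with y hy
      have haIco : a ∈ Set.Ico (0:ℝ) R := ⟨ha.1.le, ha.2⟩
      have hyIco : y ∈ Set.Ico (0:ℝ) R := ⟨le_trans ha.1.le hy.1.le, hy.2⟩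
      have hmono := hζmono haIco hyIco hy.1.le
      have hpos : 0 < y - a := sub_pos.mpr hy.1
      rw [slope_def_field]
      exact div_nonneg (sub_nonneg.mpr hmono) hpos.le
    · rw [deriv_zero_of_not_differentiableAt hd]
  have hD : 0 < 1 + a * deriv ζ a := by
    have := mul_nonneg ha.1.le hderiv
    linarith
  -- the numerator function h
  set h : ℝ → ℝ := fun q => q * (ζ a + 1 - ζ (a * q) - q) with hh_def
  have hsub : ∀ q ∈ Set.Icc (0:ℝ) 1, a * q ∈ Set.Ico (0:ℝ) R := by
    intro q hq
    constructor
    · exact mul_nonneg ha.1.le hq.1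
    · calc a * q ≤ a * 1 := mul_le_mul_of_nonneg_left hq.2 ha.1.le
        _ = a := mul_one a
        _ < R := ha.2
  -- convexity of q ↦ q * ζ (a*q) on [0,1]
  have hinner_conv : ConvexOn ℝ (Set.Icc (0:ℝ) 1) (fun q => ζ (a * q)) := by
    refine ⟨convex_Icc 0 1, ?_⟩
    intro x hx y hy t u ht hu htu
    simp only [smul_eq_mul]
    have := hζconv.2 (hsub x hx) (hsub y hy) ht hu htu
    simp only [smul_eq_mul] at this
    have harg : a * (t * x + u * y) = t * (a * x) + u * (a * y) := by ring
    rw [harg]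
    exact this
  have hinner_mono : MonotoneOn (fun q => ζ (a * q)) (Set.Icc (0:ℝ) 1) := by
    intro x hx y hy hxy
    exact hζmono (hsub x hx) (hsub y hy) (mul_le_mul_of_nonneg_left hxy ha.1.le)
  have hid_conv : ConvexOn ℝ (Set.Icc (0:ℝ) 1) (fun q : ℝ => q) :=
    convexOn_id (convex_Icc 0 1)
  have hid_mono : MonotoneOn (fun q : ℝ => q) (Set.Icc (0:ℝ) 1) := fun x _ y _ hxy => hxy
  have hmul_conv : ConvexOn ℝ (Set.Icc (0:ℝ) 1) (fun q => q * ζ (a * q)) := by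
    have := ConvexOn.mul hid_conv hinner_conv
      (fun x hx => hx.1) (fun x _ => (Real.exp_pos _).le.trans (by rw [hζg]))
      (hid_mono.monovaryOn hinner_mono)
    exact this
  -- concavity of h on [0,1]
  have hcon : ConcaveOn ℝ (Set.Icc (0:ℝ) 1) h := by
    refine ⟨convex_Icc 0 1, ?_⟩
    intro x hx y hy t u ht hu htu
    simp only [smul_eq_mul, hh_def]
    have h1 := hmul_conv.2 hx hy ht hu htu
    simp only [smul_eq_mul] at h1
    have h2 : (t * x + u * y) ^ 2 ≤ t * x ^ 2 + u * y ^ 2 := by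
      nlinarith [sq_nonneg (x - y), mul_nonneg ht hu]
    nlinarith [h1, h2]
  -- Jensen
  have hWpos : (0:ℝ) < W := by exact_mod_cast hW
  have hmemIcc : ∀ i : Fin W, p i ∈ Set.Icc (0:ℝ) 1 := by
    intro i
    refine ⟨hp i, ?_⟩
    calc p i ≤ ∑ j, p j := Finset.single_le_sum (fun j _ => hp j) (Finset.mem_univ i)
      _ = 1 := hp1
  have hwsum : ∑ _i : Fin W, ((W:ℝ)⁻¹) = 1 := by
    simp [Finset.sum_const, Finset.card_univ]
    field_simp
  have hjen := hcon.le_map_sum (t := Finset.univ) (w := fun _ : Fin W => (W:ℝ)⁻¹)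
    (p := p) (fun i _ => by positivity) hwsum (fun i _ => hmemIcc i)
  simp only [smul_eq_mul] at hjen
  have hpsum : ∑ i, (W:ℝ)⁻¹ * p i = (W:ℝ)⁻¹ := by
    rw [← Finset.mul_sum, hp1, mul_one]
  rw [hpsum] at hjen
  have hsum_h : ∑ i, h (p i) ≤ W * h ((W:ℝ)⁻¹) := by
    have : (W:ℝ)⁻¹ * ∑ i, h (p i) ≤ h ((W:ℝ)⁻¹) := by
      rw [Finset.mul_sum]; exact hjen
    calc ∑ i, h (p i) = (W:ℝ) * ((W:ℝ)⁻¹ * ∑ i, h (p i)) := by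
          field_simp
      _ ≤ (W:ℝ) * h ((W:ℝ)⁻¹) := by
          exact mul_le_mul_of_nonneg_left this hWpos.le
  -- conclude
  have hsform : ∀ q : ℝ, s q = h q / (1 + a * deriv ζ a) := fun q => hs q
  calc (∑ i, s (p i)) = (∑ i, h (p i)) / (1 + a * deriv ζ a) := by
        rw [Finset.sum_div]; exact Finset.sum_congr rfl fun i _ => hsform (p i)
    _ ≤ (W * h ((W:ℝ)⁻¹)) / (1 + a * deriv ζ a) := by
        exact (div_le_div_iff_of_pos_right hD).mpr hsum_h
    _ = W * s (1 / W) := by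
        rw [hsform, one_div, mul_div_assoc]
end
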